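/- arXiv:2301.00885 — 7 statements merged into one kernel-verified Lean document; each statement's English description precedes it below -/
import Mathlib

section
/- Let Γ be a finite group, k an arbitrary field, and V a nonzero finite-dimensional k-linear representation of Γ. Then the limit β(Γ,V) = lim_{n→∞} s_n(Γ,V)^{1/n} exists and equals dim_k V. -/
open scoped TensorProduct

/-- `sN k ρ n` is the supremum of the cardinalities of finite families of nonzero
`Γ`-invariant subspaces of `V^{⊗n}` (with the diagonal action induced by `ρ`) forming an
internal direct sum decomposition of `V^{⊗n}`; i.e. the number of indecomposable direct
summands of `V^{⊗n}` counted with multiplicity. -/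
noncomputable def sN (k : Type*) [Field k] {Γ V : Type*} [AddCommGroup V] [Module k V]
    (ρ : Γ → (V →ₗ[k] V)) (n : ℕ) : ℕ :=
  sSup {m : ℕ | ∃ W : Fin m → Submodule k (⨂[k]^n V),
    (∀ i, W i ≠ ⊥) ∧
    (∀ i (g : Γ), ∀ x ∈ W i, (PiTensorProduct.map fun _ : Fin n => ρ g) x ∈ W i) ∧
    DirectSum.IsInternal W}

namespace SNproof

section Dvl
variable {k V : Type*} [Field k] [AddCommGroup V] [Module k V]

lemma exists_dual_one {v : V} (hv : v ≠ 0) : ∃ f : V →ₗ[k] k, f v = 1 := by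
  have h : ¬ ∀ φ : Module.Dual k V, φ v = 0 := by
    rw [Module.forall_dual_apply_eq_zero_iff]; exact hv
  push_neg at h
  obtain ⟨φ, hφ⟩ := h
  exact ⟨(φ v)⁻¹ • φ, by simp [inv_mul_cancel₀ hφ]⟩

open Classical in
variable (k) in
noncomputable def du (v : V) : V →ₗ[k] k :=
  if h : v = 0 then 0 else (exists_dual_one h).choose

lemma du_self {v : V} (hv : v ≠ 0) : du k v v = 1 := by
  rw [du]
  rw [dif_neg hv]
  exact (exists_dual_one hv).choose_spec

lemma eq_smul_id_of_forall_mem_span [Nontrivial V] (m : V →ₗ[k] V)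
    (h : ∀ x : V, m x ∈ Submodule.span k {x}) :
    ∃ c : k, m = c • LinearMap.id := by
  by_cases h0 : ∀ x : V, m x = 0
  · exact ⟨0, by ext x; simp [h0]⟩
  push_neg at h0
  obtain ⟨x₀, hx₀⟩ := h0
  obtain ⟨c₀, hc₀⟩ := Submodule.mem_span_singleton.mp (h x₀)
  have hx₀0 : x₀ ≠ 0 := by rintro rfl; simp at hx₀
  refine ⟨c₀, ?_⟩
  ext x
  simp only [LinearMap.smul_apply, LinearMap.id_coe, id_eq]
  by_cases hs : x ∈ Submodule.span k {x₀}
  · obtain ⟨a, rfl⟩ := Submodule.mem_span_singleton.mp hs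
    rw [map_smul, ← hc₀, smul_comm]
  · obtain ⟨cx, hcx⟩ := Submodule.mem_span_singleton.mp (h x)
    obtain ⟨c', hc'⟩ := Submodule.mem_span_singleton.mp (h (x + x₀))
    rw [map_add, ← hcx, ← hc₀, smul_add] at hc'
    have key : (c' - cx) • x = (c₀ - c') • x₀ := by
      rw [sub_smul, sub_smul, sub_eq_sub_iff_add_eq_add]
      exact hc'.trans (add_comm _ _)
    by_cases hcc : c' = cx
    · have h2 : (c₀ - c') • x₀ = 0 := by rw [← key, hcc, sub_self, zero_smul]
      have h3 : c₀ = c' := by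
        rcases smul_eq_zero.mp h2 with h | h
        · exact sub_eq_zero.mp h
        · exact absurd h hx₀0
      rw [← hcx, ← hcc, ← h3]
    · exfalso
      apply hs
      have : x = (c' - cx)⁻¹ • ((c₀ - c') • x₀) := by
        rw [← key, smul_smul, inv_mul_cancel₀ (sub_ne_zero.mpr hcc), one_smul]
      rw [this]
      exact Submodule.smul_mem _ _ (Submodule.smul_mem _ _ (Submodule.mem_span_singleton_self _))


lemma exists_sep [Nontrivial V] {a b : V →ₗ[k] V} (hb : Function.Bijective b)
    (h : ∀ c : k, a ≠ c • b) :
    ∃ (y : V) (f : V →ₗ[k] k), y ≠ 0 ∧ f (a y) = 1 ∧ f (b y) = 0 := by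
  have hy : ∃ y : V, a y ∉ Submodule.span k {b y} := by
    by_contra hall
    push_neg at hall
    set e := LinearEquiv.ofBijective b hb with he
    have hmem : ∀ x : V, (a ∘ₗ (e.symm : V →ₗ[k] V)) x ∈ Submodule.span k {x} := by
      intro x
      have h1 := hall (e.symm x)
      have h2 : b (e.symm x) = x := e.apply_symm_apply x
      rw [h2] at h1
      simpa using h1
    obtain ⟨c, hc⟩ := eq_smul_id_of_forall_mem_span _ hmem
    apply h c
    ext v
    have h3 : (a ∘ₗ (e.symm : V →ₗ[k] V)) (b v) = (c • LinearMap.id : V →ₗ[k] V) (b v) := by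
      rw [hc]
    have h4 : e.symm (b v) = v := e.symm_apply_apply v
    simpa [h4] using h3
  obtain ⟨y, hy⟩ := hy
  have hy0 : y ≠ 0 := by
    rintro rfl
    exact hy (by simp)
  have hmk : Submodule.Quotient.mk (p := Submodule.span k {b y}) (a y) ≠ 0 := by
    rw [ne_eq, Submodule.Quotient.mk_eq_zero]
    exact hy
  obtain ⟨g, hg⟩ := exists_dual_one (k := k) hmk
  refine ⟨y, g ∘ₗ (Submodule.span k {b y}).mkQ, hy0, ?_, ?_⟩
  · simpa using hg
  · have : (Submodule.span k {b y}).mkQ (b y) = 0 := by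
      rw [Submodule.mkQ_apply, Submodule.Quotient.mk_eq_zero]
      exact Submodule.mem_span_singleton_self _
    simp [this]


end Dvl

attribute [local instance] Fintype.ofFinite
set_option linter.unusedSectionVars false

section Main

variable {k V Γ : Type*} [Field k] [AddCommGroup V] [Module k V] [Group Γ] [Finite Γ]
variable (π : Γ →* Module.End k V)

lemma pi_bij (g : Γ) : Function.Bijective (π g) := by
  have h1 : (π g) * (π g⁻¹) = 1 := by rw [← map_mul, mul_inv_cancel, map_one]
  have h2 : (π g⁻¹) * (π g) = 1 := by rw [← map_mul, inv_mul_cancel, map_one]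
  constructor
  · intro x y hxy
    have h3 : π g⁻¹ (π g x) = π g⁻¹ (π g y) := by rw [hxy]
    simpa [← Module.End.mul_apply, h2] using h3
  · intro y
    refine ⟨π g⁻¹ y, ?_⟩
    have := congrFun (congrArg (DFunLike.coe) h1) y
    simpa [Module.End.mul_apply] using this

def rel (a b : Γ) : Prop := ∃ c : kˣ, π a = (c : k) • π b

lemma rel_refl (a : Γ) : rel π a a := ⟨1, by simp⟩

lemma rel_symm {a b : Γ} (h : rel π a b) : rel π b a := by
  obtain ⟨c, hc⟩ := h
  exact ⟨c⁻¹, by rw [hc, smul_smul]; simp⟩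

lemma rel_trans {a b c : Γ} (h1 : rel π a b) (h2 : rel π b c) : rel π a c := by
  obtain ⟨c1, hc1⟩ := h1
  obtain ⟨c2, hc2⟩ := h2
  refine ⟨c1 * c2, ?_⟩
  rw [hc1, hc2, smul_smul, Units.val_mul]

def relSetoid : Setoid Γ := ⟨rel π, ⟨rel_refl π, rel_symm π, rel_trans π⟩⟩

open Classical in
noncomputable def rp (g : Γ) : Γ :=
  if rel π g 1 then 1 else (Quotient.mk (relSetoid π) g).out

lemma rel_rp (g : Γ) : rel π (rp π g) g := by
  rw [rp]
  split_ifs with h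
  · exact rel_symm π h
  · exact Quotient.mk_out (s := relSetoid π) g

lemma rp_eq_of_rel {a b : Γ} (h : rel π a b) : rp π a = rp π b := by
  rw [rp, rp]
  by_cases h1 : rel π a 1
  · rw [if_pos h1, if_pos (rel_trans π (rel_symm π h) h1)]
  · rw [if_neg h1, if_neg (fun h' => h1 (rel_trans π h h'))]
    congr 1
    exact Quotient.sound h

lemma rp_one : rp π (1 : Γ) = 1 := by rw [rp, if_pos (rel_refl π 1)]

lemma rp_idem (g : Γ) : rp π (rp π g) = rp π g := rp_eq_of_rel π (rel_rp π g)

lemma rel_iff_rp_eq {a b : Γ} : rel π a b ↔ rp π a = rp π b := by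
  constructor
  · exact rp_eq_of_rel π
  · intro h
    exact rel_trans π (rel_symm π (h ▸ rel_rp π a)) (rel_rp π b)

lemma rel_mul_left {a b : Γ} (g : Γ) (h : rel π a b) : rel π (g * a) (g * b) := by
  obtain ⟨c, hc⟩ := h
  exact ⟨c, by rw [map_mul, map_mul, hc, mul_smul_comm]⟩

noncomputable def TT : Finset Γ := @Finset.image _ _ (Classical.decEq Γ) (rp π) Finset.univ

lemma mem_TT {t : Γ} : t ∈ TT π ↔ rp π t = t := by
  rw [TT, @Finset.mem_image _ _ (Classical.decEq Γ)]
  constructor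
  · rintro ⟨u, -, rfl⟩
    exact rp_idem π u
  · intro h
    exact ⟨t, Finset.mem_univ t, h⟩

lemma one_mem_TT : (1 : Γ) ∈ TT π := (mem_TT π).mpr (rp_one π)

open Classical in
noncomputable def sc (a b : Γ) : kˣ := if h : rel π a b then h.choose else 1

lemma sc_spec {a b : Γ} (h : rel π a b) : π a = ((sc π a b : kˣ) : k) • π b := by
  rw [sc, dif_pos h]
  exact h.choose_spec

lemma smul_one_end_eq_one [Nontrivial V] {c : k} (h : c • (1 : Module.End k V) = 1) : c = 1 := by
  obtain ⟨v, hv⟩ := exists_ne (0 : V)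
  have h2 : c • v = v := by
    have := congrFun (congrArg (DFunLike.coe) h) v
    simpa using this
  have h3 : (c - 1) • v = 0 := by rw [sub_smul, one_smul, h2, sub_self]
  rcases smul_eq_zero.mp h3 with h4 | h4
  · exact sub_eq_zero.mp h4
  · exact absurd h4 hv

lemma sc_one [Nontrivial V] : ((sc π (1:Γ) (1:Γ) : kˣ) : k) = 1 := by
  have h := sc_spec π (rel_refl π (1:Γ))
  rw [map_one] at h
  exact smul_one_end_eq_one h.symm


lemma pi_inv_smul {a w : Γ} {c : kˣ} (h : π a = (c : k) • π w) :
    π a⁻¹ = ((c⁻¹ : kˣ) : k) • π w⁻¹ := by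
  have h1 : π a * (((c⁻¹ : kˣ) : k) • π w⁻¹) = 1 := by
    rw [h, smul_mul_assoc, mul_smul_comm, smul_smul]
    norm_cast
    rw [mul_inv_cancel, Units.val_one, one_smul, ← map_mul, mul_inv_cancel, map_one]
  calc π a⁻¹ = π a⁻¹ * (π a * (((c⁻¹ : kˣ) : k) • π w⁻¹)) := by rw [h1, mul_one]
  _ = (π a⁻¹ * π a) * (((c⁻¹ : kˣ) : k) • π w⁻¹) := by rw [mul_assoc]
  _ = ((c⁻¹ : kˣ) : k) • π w⁻¹ := by rw [← map_mul, inv_mul_cancel, map_one, one_mul]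

/-- the diagonal action on the tensor power -/
noncomputable def Mp (n : ℕ) (g : Γ) : (⨂[k]^n V) →ₗ[k] (⨂[k]^n V) :=
  PiTensorProduct.map fun _ : Fin n => π g

lemma Mp_one (n : ℕ) : Mp π n 1 = LinearMap.id := by
  rw [Mp]
  have : (fun _ : Fin n => π 1) = fun _ : Fin n => (LinearMap.id : V →ₗ[k] V) := by
    funext i
    rw [map_one]
    rfl
  rw [this, PiTensorProduct.map_id]

lemma Mp_mul (n : ℕ) (a b : Γ) : Mp π n (a * b) = (Mp π n a) ∘ₗ (Mp π n b) := by
  rw [Mp, Mp, Mp, ← PiTensorProduct.map_comp]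
  congr 1
  funext i
  rw [map_mul]
  rfl

lemma Mp_smul (n : ℕ) {g w : Γ} {c : k} (h : π g = c • π w) :
    Mp π n g = c ^ n • Mp π n w := by
  apply PiTensorProduct.ext
  apply MultilinearMap.ext
  intro x
  simp only [LinearMap.compMultilinearMap_apply, Mp, PiTensorProduct.map_tprod,
    LinearMap.smul_apply]
  rw [h]
  simp only [LinearMap.smul_apply]
  rw [MultilinearMap.map_smul_univ (PiTensorProduct.tprod k) (fun _ : Fin n => c) (fun i => π w (x i))]
  rw [Finset.prod_const, Finset.card_univ, Fintype.card_fin]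

lemma Mp_Mp (n : ℕ) (a b : Γ) (x : ⨂[k]^n V) :
    Mp π n a (Mp π n b x) = Mp π n (a * b) x := by
  rw [Mp_mul]
  rfl

end Main

section PF
variable {k V : Type*} [Field k] [AddCommGroup V] [Module k V]

/-- product-of-functionals functional on a tensor power -/
noncomputable def pf {n : ℕ} (f : Fin n → (V →ₗ[k] k)) : (⨂[k]^n V) →ₗ[k] k :=
  PiTensorProduct.lift ((MultilinearMap.mkPiAlgebra k (Fin n) k).compLinearMap f)

lemma pf_tprod {n : ℕ} (f : Fin n → (V →ₗ[k] k)) (x : Fin n → V) :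
    pf f (PiTensorProduct.tprod k x) = ∏ i, f i (x i) := by
  simp [pf, PiTensorProduct.lift.tprod, MultilinearMap.compLinearMap_apply,
    MultilinearMap.mkPiAlgebra_apply]

lemma tprod_ne_zero {n : ℕ} (x : Fin n → V) (hx : ∀ i, x i ≠ 0) :
    PiTensorProduct.tprod k x ≠ 0 := by
  intro h
  have h1 : pf (fun i => du k (x i)) (PiTensorProduct.tprod k x) = 1 := by
    rw [pf_tprod]
    apply Finset.prod_eq_one
    intro i _
    exact du_self (hx i)
  rw [h, map_zero] at h1
  exact zero_ne_one h1

end PF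

section Pair
variable {k V Γ : Type*} [Field k] [AddCommGroup V] [Module k V] [Group Γ] [Finite Γ]
  [Nontrivial V]
variable (π : Γ →* Module.End k V)

lemma exists_pairdata (p : Γ × Γ) : ∃ yf : V × (V →ₗ[k] k), yf.1 ≠ 0 ∧
    (¬ rel π p.1 p.2 → yf.2 (π p.1 yf.1) = 1 ∧ yf.2 (π p.2 yf.1) = 0) := by
  by_cases h : rel π p.1 p.2
  · obtain ⟨v, hv⟩ := exists_ne (0 : V)
    exact ⟨(v, 0), hv, fun h' => absurd h h'⟩
  · have hc : ∀ c : k, π p.1 ≠ c • π p.2 := by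
      intro c hcc
      apply h
      rcases eq_or_ne c 0 with rfl | hc0
      · exfalso
        rw [zero_smul] at hcc
        obtain ⟨v, hv⟩ := exists_ne (0 : V)
        apply hv
        apply (pi_bij π p.1).injective
        rw [map_zero, hcc]
        rfl
      · exact ⟨Units.mk0 c hc0, hcc⟩
    obtain ⟨y, f, hy, h1, h0⟩ := exists_sep (pi_bij π p.2) hc
    exact ⟨(y, f), hy, fun _ => ⟨h1, h0⟩⟩

noncomputable def yv (p : Γ × Γ) : V := (exists_pairdata π p).choose.1

noncomputable def yf (p : Γ × Γ) : V →ₗ[k] k := (exists_pairdata π p).choose.2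

lemma yv_ne (p : Γ × Γ) : yv π p ≠ 0 := (exists_pairdata π p).choose_spec.1

lemma yf_spec {p : Γ × Γ} (h : ¬ rel π p.1 p.2) :
    yf π p (π p.1 (yv π p)) = 1 ∧ yf π p (π p.2 (yv π p)) = 0 :=
  (exists_pairdata π p).choose_spec.2 h

open Classical in
/-- slot functionals detecting a representative `i` -/
noncomputable def hf (i : Γ) (p : Γ × Γ) : V →ₗ[k] k :=
  if p.1 = i ∧ ¬ rel π p.1 p.2 then yf π p else du k (π i (yv π p))

lemma pi_ne_zero (g : Γ) {v : V} (hv : v ≠ 0) : π g v ≠ 0 := by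
  intro h
  apply hv
  apply (pi_bij π g).injective
  rw [h, map_zero]

open Classical in
lemma hf_prod {t i : Γ} (ht : rp π t = t) (hi : rp π i = i) :
    (∏ p : Γ × Γ, hf π i p (π t (yv π p))) = if t = i then 1 else 0 := by
  split_ifs with hti
  · subst hti
    apply Finset.prod_eq_one
    intro p _
    rw [hf]
    split_ifs with hp
    · rw [← hp.1]
      exact (yf_spec π hp.2).1
    · exact du_self (pi_ne_zero π t (yv_ne π p))
  · apply Finset.prod_eq_zero (Finset.mem_univ ((i, t) : Γ × Γ))
    have hrel : ¬ rel π i t := by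
      intro hr
      exact hti ((hi ▸ ht ▸ rp_eq_of_rel π hr).symm)
    rw [hf, if_pos ⟨rfl, hrel⟩]
    exact (yf_spec π (p := (i, t)) hrel).2

end Pair

section Grand
variable {k V Γ : Type*} [Field k] [AddCommGroup V] [Module k V] [Group Γ] [Finite Γ]
  [Nontrivial V] [FiniteDimensional k V]
variable (π : Γ →* Module.End k V) (n' : ℕ)

/-- enumeration of pair slots -/
noncomputable def eG (Γ : Type*) [Finite Γ] : Fin (Fintype.card (Γ × Γ)) ≃ (Γ × Γ) :=
  (Fintype.equivFin (Γ × Γ)).symm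

/-- slot vector assignment -/
noncomputable def cvec (j : Fin n' → Fin (Module.finrank k V)) :
    Fin (Fintype.card (Γ × Γ) + n') → V :=
  fun pos => Sum.elim (fun q => yv π (eG Γ q)) (fun p => Module.finBasis k V (j p))
    (finSumFinEquiv.symm pos)

lemma cvec_ne (j : Fin n' → Fin (Module.finrank k V)) (pos) : cvec π n' j pos ≠ 0 := by
  rw [cvec]
  rcases finSumFinEquiv.symm pos with q | p
  · exact yv_ne π _
  · exact Module.Basis.ne_zero _ _

/-- generating vectors of the invariant decomposition -/
noncomputable def Xv (t : Γ) (j : Fin n' → Fin (Module.finrank k V)) :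
    ⨂[k]^(Fintype.card (Γ × Γ) + n') V :=
  Mp π _ t (PiTensorProduct.tprod k (cvec π n' j))

lemma Xv_one (j : Fin n' → Fin (Module.finrank k V)) :
    Xv π n' 1 j = PiTensorProduct.tprod k (cvec π n' j) := by
  rw [Xv, Mp_one]
  rfl

/-- detecting functional -/
noncomputable def Th (j : Fin n' → Fin (Module.finrank k V)) :
    (⨂[k]^(Fintype.card (Γ × Γ) + n') V) →ₗ[k] k :=
  pf (fun pos => Sum.elim (fun q => hf π 1 (eG Γ q))
    (fun p => (Module.finBasis k V).coord (j p)) (finSumFinEquiv.symm pos))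

open Classical in
lemma Th_Xv {w : Γ} (hw : rp π w = w) (i j : Fin n' → Fin (Module.finrank k V)) :
    Th π n' j (Xv π n' w i) = if w = 1 ∧ i = j then 1 else 0 := by
  rw [Th, Xv, Mp, PiTensorProduct.map_tprod, pf_tprod]
  rw [Fintype.prod_equiv finSumFinEquiv.symm
    (fun pos => (Sum.elim (fun q => hf π 1 (eG Γ q))
      (fun p => (Module.finBasis k V).coord (j p)) (finSumFinEquiv.symm pos))
      (π w (cvec π n' i pos)))
    (fun s => (Sum.elim (fun q => hf π 1 (eG Γ q))
      (fun p => (Module.finBasis k V).coord (j p)) s)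
      (π w (Sum.elim (fun q => yv π (eG Γ q)) (fun p => Module.finBasis k V (i p)) s)))
    (fun pos => rfl)]
  rw [Fintype.prod_sum_type]
  simp only [Sum.elim_inl, Sum.elim_inr]
  rw [Fintype.prod_equiv (eG Γ)
    (fun q => hf π 1 (eG Γ q) (π w (yv π (eG Γ q))))
    (fun p => hf π 1 p (π w (yv π p))) (fun q => rfl)]
  rw [hf_prod π hw (rp_one π)]
  by_cases hw1 : w = 1
  · subst hw1
    rw [if_pos rfl, one_mul]
    have hcoord : ∀ p : Fin n',
        (Module.finBasis k V).coord (j p) (π 1 (Module.finBasis k V (i p)))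
          = if i p = j p then 1 else 0 := by
      intro p
      rw [map_one]
      have h1 : (1 : Module.End k V) (Module.finBasis k V (i p)) = Module.finBasis k V (i p) := rfl
      rw [h1, Module.Basis.coord_apply, Module.Basis.repr_self, Finsupp.single_apply]
    by_cases hij : i = j
    · subst hij
      rw [if_pos ⟨rfl, rfl⟩]
      apply Finset.prod_eq_one
      intro p _
      rw [hcoord p, if_pos rfl]
    · rw [if_neg (by tauto)]
      obtain ⟨p, hp⟩ := Function.ne_iff.mp hij
      apply Finset.prod_eq_zero (Finset.mem_univ p)
      rw [hcoord p, if_neg hp]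
  · rw [if_neg hw1, zero_mul, if_neg (by tauto)]

/-- rank-one building block -/
noncomputable def E0 (j : Fin n' → Fin (Module.finrank k V)) :
    (⨂[k]^(Fintype.card (Γ × Γ) + n') V) →ₗ[k] (⨂[k]^(Fintype.card (Γ × Γ) + n') V) :=
  (Th π n' j).smulRight (PiTensorProduct.tprod k (cvec π n' j))

/-- equivariant projector onto the `j`-th piece -/
noncomputable def Ep (j : Fin n' → Fin (Module.finrank k V)) :
    (⨂[k]^(Fintype.card (Γ × Γ) + n') V) →ₗ[k] (⨂[k]^(Fintype.card (Γ × Γ) + n') V) :=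
  ∑ t ∈ TT π, (Mp π _ t) ∘ₗ (E0 π n' j) ∘ₗ (Mp π _ t⁻¹)

/-- total equivariant projector -/
noncomputable def Pp : (⨂[k]^(Fintype.card (Γ × Γ) + n') V) →ₗ[k]
    (⨂[k]^(Fintype.card (Γ × Γ) + n') V) :=
  ∑ j : Fin n' → Fin (Module.finrank k V), Ep π n' j

lemma Mp_Xv (g t : Γ) (j : Fin n' → Fin (Module.finrank k V)) :
    Mp π _ g (Xv π n' t j)
      = ((sc π (g * t) (rp π (g * t)) : kˣ) : k) ^ (Fintype.card (Γ × Γ) + n')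
          • Xv π n' (rp π (g * t)) j := by
  rw [Xv, Mp_Mp]
  have hrel : rel π (g * t) (rp π (g * t)) := rel_symm π (rel_rp π (g * t))
  rw [Mp_smul π _ (sc_spec π hrel)]
  rfl


open Classical in
lemma Ep_Xv {t : Γ} (ht : t ∈ TT π) (i j : Fin n' → Fin (Module.finrank k V)) :
    Ep π n' j (Xv π n' t i) = if i = j then Xv π n' t j else 0 := by
  rw [Ep, LinearMap.sum_apply]
  rw [Finset.sum_eq_single t]
  · rw [LinearMap.comp_apply, LinearMap.comp_apply]
    have h1 : Mp π _ t⁻¹ (Xv π n' t i) = PiTensorProduct.tprod k (cvec π n' i) := by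
      rw [Mp_Xv, inv_mul_cancel, rp_one, sc_one π, one_pow, one_smul, Xv_one]
    rw [h1, E0, LinearMap.smulRight_apply, ← Xv_one π n' i, Th_Xv π n' (rp_one π)]
    by_cases hij : i = j
    · subst hij
      rw [if_pos ⟨rfl, rfl⟩, if_pos rfl, one_smul]
      rfl
    · rw [if_neg (fun hc => hij hc.2), if_neg hij, zero_smul, map_zero]
  · intro u hu hut
    rw [LinearMap.comp_apply, LinearMap.comp_apply, Mp_Xv]
    have hw : rp π (u⁻¹ * t) ≠ 1 := by
      intro h1
      apply hut
      have hrel1 : rel π (u⁻¹ * t) 1 := (rel_iff_rp_eq π).mpr (by rw [h1, rp_one])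
      have hrel2 : rel π (u * (u⁻¹ * t)) (u * 1) := rel_mul_left π u hrel1
      rw [mul_inv_cancel_left, mul_one] at hrel2
      have h3 := rp_eq_of_rel π hrel2
      rw [(mem_TT π).mp ht, (mem_TT π).mp hu] at h3
      exact h3.symm
    have hth : Th π n' j (Xv π n' (rp π (u⁻¹ * t)) i) = 0 := by
      rw [Th_Xv π n' (rp_idem π _), if_neg (fun hc => hw hc.1)]
    rw [map_smul, E0, LinearMap.smulRight_apply, hth, zero_smul, smul_zero, map_zero]
  · intro h
    exact absurd ht h

open Classical in
lemma Pp_Xv {t : Γ} (ht : t ∈ TT π) (j : Fin n' → Fin (Module.finrank k V)) :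
    Pp π n' (Xv π n' t j) = Xv π n' t j := by
  rw [Pp, LinearMap.sum_apply]
  rw [Finset.sum_congr rfl (fun i _ => Ep_Xv π n' ht j i)]
  rw [Finset.sum_ite_eq]
  rw [if_pos (Finset.mem_univ j)]

lemma Ep_comm (j : Fin n' → Fin (Module.finrank k V)) (g : Γ)
    (x : ⨂[k]^(Fintype.card (Γ × Γ) + n') V) :
    Ep π n' j (Mp π _ g x) = Mp π _ g (Ep π n' j x) := by
  rw [Ep, LinearMap.sum_apply, LinearMap.sum_apply, map_sum]
  refine (Finset.sum_nbij' (fun u => rp π (g * u)) (fun u => rp π (g⁻¹ * u))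
    (fun u _ => (mem_TT π).mpr (rp_idem π _)) (fun u _ => (mem_TT π).mpr (rp_idem π _))
    ?_ ?_ ?_).symm
  · intro u hu
    have hrel1 : rel π (g⁻¹ * rp π (g * u)) (g⁻¹ * (g * u)) :=
      rel_mul_left π g⁻¹ (rel_rp π (g * u))
    have h2 := rp_eq_of_rel π hrel1
    rw [inv_mul_cancel_left] at h2
    show rp π (g⁻¹ * rp π (g * u)) = u
    rw [h2, (mem_TT π).mp hu]
  · intro u hu
    have hrel1 : rel π (g * rp π (g⁻¹ * u)) (g * (g⁻¹ * u)) :=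
      rel_mul_left π g (rel_rp π (g⁻¹ * u))
    have h2 := rp_eq_of_rel π hrel1
    rw [mul_inv_cancel_left] at h2
    show rp π (g * rp π (g⁻¹ * u)) = u
    rw [h2, (mem_TT π).mp hu]
  · intro u hu
    rw [LinearMap.comp_apply, LinearMap.comp_apply, LinearMap.comp_apply, LinearMap.comp_apply]
    set c := ((sc π (g * u) (rp π (g * u)) : kˣ) : k) with hcdef
    have hc : π (g * u) = c • π (rp π (g * u)) := sc_spec π (rel_symm π (rel_rp π (g * u)))
    have claim1 : π ((rp π (g * u))⁻¹ * g) = c • π u⁻¹ := by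
      have e1 : (rp π (g * u))⁻¹ * g = (rp π (g * u))⁻¹ * (g * u) * u⁻¹ := by group
      calc π ((rp π (g * u))⁻¹ * g)
          = (π ((rp π (g * u))⁻¹) * π (g * u)) * π u⁻¹ := by rw [e1, map_mul, map_mul]
        _ = (π ((rp π (g * u))⁻¹) * (c • π (rp π (g * u)))) * π u⁻¹ := by rw [hc]
        _ = c • ((π ((rp π (g * u))⁻¹) * π (rp π (g * u))) * π u⁻¹) := by
            rw [mul_smul_comm, smul_mul_assoc]
        _ = c • π u⁻¹ := by rw [← map_mul, inv_mul_cancel, map_one, one_mul]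
    calc Mp π _ g (Mp π _ u (E0 π n' j (Mp π _ u⁻¹ x)))
        = Mp π _ (g * u) (E0 π n' j (Mp π _ u⁻¹ x)) := Mp_Mp π _ g u _
      _ = c ^ (Fintype.card (Γ × Γ) + n') •
            Mp π _ (rp π (g * u)) (E0 π n' j (Mp π _ u⁻¹ x)) := by
          rw [Mp_smul π _ hc]
          rfl
      _ = Mp π _ (rp π (g * u)) (E0 π n' j
            (c ^ (Fintype.card (Γ × Γ) + n') • Mp π _ u⁻¹ x)) := by
          rw [map_smul, map_smul]
      _ = Mp π _ (rp π (g * u)) (E0 π n' j (Mp π _ ((rp π (g * u))⁻¹ * g) x)) := by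
          rw [Mp_smul π _ claim1]
          rfl
      _ = Mp π _ (rp π (g * u)) (E0 π n' j (Mp π _ (rp π (g * u))⁻¹ (Mp π _ g x))) := by
          rw [Mp_Mp]

lemma Pp_comm (g : Γ) (x : ⨂[k]^(Fintype.card (Γ × Γ) + n') V) :
    Pp π n' (Mp π _ g x) = Mp π _ g (Pp π n' x) := by
  rw [Pp, LinearMap.sum_apply, LinearMap.sum_apply, map_sum]
  exact Finset.sum_congr rfl fun j _ => Ep_comm π n' j g x


lemma eq_self_of_mem_span {M : Type*} [AddCommGroup M] [Module k M]
    (F : M →ₗ[k] M) {s : Set M} (h : ∀ y ∈ s, F y = y) {x : M}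
    (hx : x ∈ Submodule.span k s) : F x = x :=
  LinearMap.eqOn_span (f := F) (g := LinearMap.id) (fun y hy => by simpa using h y hy) hx

lemma eq_zero_of_mem_span {M M' : Type*} [AddCommGroup M] [Module k M] [AddCommGroup M']
    [Module k M'] (F : M →ₗ[k] M') {s : Set M} (h : ∀ y ∈ s, F y = 0) {x : M}
    (hx : x ∈ Submodule.span k s) : F x = 0 :=
  LinearMap.mem_ker.mp ((Submodule.span_le.mpr fun y hy => LinearMap.mem_ker.mpr (h y hy)) hx)

/-- the invariant pieces -/
noncomputable def Wj (j : Fin n' → Fin (Module.finrank k V)) :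
    Submodule k (⨂[k]^(Fintype.card (Γ × Γ) + n') V) :=
  Submodule.span k ((fun t => Xv π n' t j) '' (TT π : Set Γ))

lemma Xv_mem_Wj {t : Γ} (ht : t ∈ TT π) (j : Fin n' → Fin (Module.finrank k V)) :
    Xv π n' t j ∈ Wj π n' j :=
  Submodule.subset_span ⟨t, ht, rfl⟩

lemma Wj_ne_bot (j : Fin n' → Fin (Module.finrank k V)) : Wj π n' j ≠ ⊥ := by
  rw [Submodule.ne_bot_iff]
  refine ⟨Xv π n' 1 j, Xv_mem_Wj π n' (one_mem_TT π) j, ?_⟩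
  rw [Xv_one]
  exact tprod_ne_zero _ (cvec_ne π n' j)

lemma Mp_mem_Wj (g : Γ) {j : Fin n' → Fin (Module.finrank k V)} {x}
    (hx : x ∈ Wj π n' j) : Mp π _ g x ∈ Wj π n' j := by
  have hle : Submodule.map (Mp π _ g) (Wj π n' j) ≤ Wj π n' j := by
    rw [Wj, Submodule.map_span, Submodule.span_le]
    rintro _ ⟨_, ⟨t, ht, rfl⟩, rfl⟩
    rw [SetLike.mem_coe, Mp_Xv]
    exact Submodule.smul_mem _ _
      (Xv_mem_Wj π n' ((mem_TT π).mpr (rp_idem π _)) j)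
  exact hle (Submodule.mem_map_of_mem hx)

lemma Ep_mem (j : Fin n' → Fin (Module.finrank k V)) (x) :
    Ep π n' j x ∈ Wj π n' j := by
  rw [Ep, LinearMap.sum_apply]
  apply Submodule.sum_mem
  intro u hu
  rw [LinearMap.comp_apply, LinearMap.comp_apply, E0, LinearMap.smulRight_apply, map_smul]
  exact Submodule.smul_mem _ _ (Xv_mem_Wj π n' hu j)

lemma Pp_fix {j : Fin n' → Fin (Module.finrank k V)} {x}
    (hx : x ∈ Wj π n' j) : Pp π n' x = x := by
  refine eq_self_of_mem_span _ ?_ hx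
  rintro _ ⟨t, ht, rfl⟩
  exact Pp_Xv π n' ht j

lemma Pp_mem_sup (x) : Pp π n' x ∈ ⨆ j, Wj π n' j := by
  rw [Pp, LinearMap.sum_apply]
  apply Submodule.sum_mem
  intro j _
  exact Submodule.mem_iSup_of_mem j (Ep_mem π n' j x)

lemma Pp_Pp (x) : Pp π n' (Pp π n' x) = Pp π n' x := by
  have h1 : Pp π n' x = ∑ j, Ep π n' j x := by rw [Pp, LinearMap.sum_apply]
  rw [h1, map_sum]
  exact Finset.sum_congr rfl fun j _ => Pp_fix π n' (Ep_mem π n' j x)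

open Classical in
theorem grand_mem :
    ∃ W : Fin (Module.finrank k V ^ n') →
        Submodule k (⨂[k]^(Fintype.card (Γ × Γ) + n') V),
      (∀ i, W i ≠ ⊥) ∧
      (∀ i (g : Γ), ∀ x ∈ W i,
        (PiTensorProduct.map fun _ : Fin (Fintype.card (Γ × Γ) + n') => π g) x ∈ W i) ∧
      DirectSum.IsInternal W := by
  have hd : 0 < Module.finrank k V := Module.finrank_pos
  have cardJ : Fintype.card (Fin n' → Fin (Module.finrank k V))
      = Module.finrank k V ^ n' := by
    rw [Fintype.card_fun, Fintype.card_fin, Fintype.card_fin]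
  set j₀ : Fin n' → Fin (Module.finrank k V) := fun _ => ⟨0, hd⟩ with hj₀
  set Wf : (Fin n' → Fin (Module.finrank k V)) →
      Submodule k (⨂[k]^(Fintype.card (Γ × Γ) + n') V) :=
    fun j => if j = j₀ then Wj π n' j ⊔ LinearMap.ker (Pp π n') else Wj π n' j with hWf
  have hWjle : ∀ j, Wj π n' j ≤ Wf j := by
    intro j
    rw [hWf]
    dsimp only
    split_ifs
    · exact le_sup_left
    · exact le_rfl
  have hkerle : LinearMap.ker (Pp π n') ≤ Wf j₀ := by
    rw [hWf]
    dsimp only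
    rw [if_pos rfl]
    exact le_sup_right
  -- key pointwise facts
  have fixW : ∀ j, ∀ x ∈ Wj π n' j, Ep π n' j (Pp π n' x) = x := by
    intro j x hx
    refine eq_self_of_mem_span ((Ep π n' j) ∘ₗ (Pp π n')) ?_ hx
    rintro _ ⟨t, ht, rfl⟩
    rw [LinearMap.comp_apply, Pp_Xv π n' ht, Ep_Xv π n' ht, if_pos rfl]
  have killW : ∀ i j, i ≠ j → ∀ x ∈ Wj π n' i, Ep π n' j (Pp π n' x) = 0 := by
    intro i j hij x hx
    refine eq_zero_of_mem_span ((Ep π n' j) ∘ₗ (Pp π n')) ?_ hx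
    rintro _ ⟨t, ht, rfl⟩
    rw [LinearMap.comp_apply, Pp_Xv π n' ht, Ep_Xv π n' ht, if_neg hij]
  have killKer : ∀ j, ∀ x ∈ LinearMap.ker (Pp π n'), Ep π n' j (Pp π n' x) = 0 := by
    intro j x hx
    rw [LinearMap.mem_ker.mp hx, map_zero]
  -- projectors
  have hPr : ∀ j, ∃ Pr : (⨂[k]^(Fintype.card (Γ × Γ) + n') V) →ₗ[k]
      (⨂[k]^(Fintype.card (Γ × Γ) + n') V),
      (∀ x ∈ Wf j, Pr x = x) ∧ (∀ i, i ≠ j → ∀ x ∈ Wf i, Pr x = 0) := by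
    intro j
    by_cases hj : j = j₀
    · subst hj
      refine ⟨(Ep π n' j₀) ∘ₗ (Pp π n') + (LinearMap.id - Pp π n'), ?_, ?_⟩
      · intro x hx
        rw [hWf] at hx
        dsimp only at hx
        rw [if_pos rfl] at hx
        obtain ⟨a, ha, b, hb, rfl⟩ := Submodule.mem_sup.mp hx
        have hb' := LinearMap.mem_ker.mp hb
        simp only [LinearMap.add_apply, LinearMap.comp_apply, LinearMap.sub_apply,
          LinearMap.id_apply, map_add]
        rw [hb', map_zero, sub_zero, fixW j₀ a ha, Pp_fix π n' ha]
        abel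
      · intro i hij x hx
        rw [hWf] at hx
        dsimp only at hx
        rw [if_neg hij] at hx
        simp only [LinearMap.add_apply, LinearMap.comp_apply, LinearMap.sub_apply,
          LinearMap.id_apply]
        rw [killW i j₀ hij x hx, Pp_fix π n' hx]
        abel
    · refine ⟨(Ep π n' j) ∘ₗ (Pp π n'), ?_, ?_⟩
      · intro x hx
        rw [hWf] at hx
        dsimp only at hx
        rw [if_neg hj] at hx
        exact fixW j x hx
      · intro i hij x hx
        rw [hWf] at hx
        dsimp only at hx
        split_ifs at hx with hi
        · subst hi
          obtain ⟨a, ha, b, hb, rfl⟩ := Submodule.mem_sup.mp hx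
          rw [LinearMap.comp_apply, map_add, LinearMap.mem_ker.mp hb, add_zero]
          exact killW j₀ j hij a ha
        · exact killW i j hij x hx
  have hsup : (⨆ j, Wf j) = ⊤ := by
    rw [eq_top_iff]
    intro x _
    have h1 : Pp π n' x ∈ ⨆ j, Wf j := (iSup_mono hWjle) (Pp_mem_sup π n' x)
    have hker : x - Pp π n' x ∈ LinearMap.ker (Pp π n') := by
      rw [LinearMap.mem_ker, map_sub, Pp_Pp, sub_self]
    have h2 : x - Pp π n' x ∈ ⨆ j, Wf j :=
      Submodule.mem_iSup_of_mem j₀ (hkerle hker)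
    have h3 : Pp π n' x + (x - Pp π n' x) = x := by abel
    rw [← h3]
    exact Submodule.add_mem _ h1 h2
  have hind : iSupIndep Wf := by
    intro j
    obtain ⟨Pr, hfix, hkill⟩ := hPr j
    rw [Submodule.disjoint_def]
    intro x hxj hxo
    have hle : (⨆ i, ⨆ (_ : i ≠ j), Wf i) ≤ LinearMap.ker Pr :=
      iSup_le fun i => iSup_le fun hij => fun y hy => LinearMap.mem_ker.mpr (hkill i hij y hy)
    have h0 : Pr x = 0 := LinearMap.mem_ker.mp (hle hxo)
    rw [← hfix x hxj, h0]
  set ee : Fin (Module.finrank k V ^ n') ≃ (Fin n' → Fin (Module.finrank k V)) :=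
    (Fintype.equivFinOfCardEq cardJ).symm with hee
  refine ⟨fun i => Wf (ee i), ?_, ?_, ?_⟩
  · intro i hbot
    have hbot' : Wf (ee i) = ⊥ := hbot
    have h1 := hWjle (ee i)
    rw [hbot', le_bot_iff] at h1
    exact Wj_ne_bot π n' (ee i) h1
  · intro i g x hx
    have key : ∀ j, ∀ y ∈ Wf j, Mp π _ g y ∈ Wf j := by
      intro j y hy
      rw [hWf] at hy ⊢
      dsimp only at hy ⊢
      split_ifs at hy ⊢ with h
      · obtain ⟨a, ha, b, hb, rfl⟩ := Submodule.mem_sup.mp hy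
        rw [map_add]
        refine Submodule.add_mem _ (Submodule.mem_sup_left (Mp_mem_Wj π n' g ha))
          (Submodule.mem_sup_right ?_)
        rw [LinearMap.mem_ker] at hb ⊢
        rw [Pp_comm, hb, map_zero]
      · exact Mp_mem_Wj π n' g hy
    exact key (ee i) x hx
  · apply DirectSum.isInternal_submodule_of_iSupIndep_of_iSup_eq_top
    · exact hind.comp ee.injective
    · rw [← hsup]
      exact Equiv.iSup_comp (g := Wf) ee

end Grand

section Rank
variable (k V : Type*) [Field k] [AddCommGroup V] [Module k V] [FiniteDimensional k V]

lemma fd_finrank_pow : ∀ n : ℕ, FiniteDimensional k (⨂[k]^n V) ∧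
    Module.finrank k (⨂[k]^n V) = Module.finrank k V ^ n := by
  intro n
  induction n with
  | zero =>
    have e : (⨂[k]^0 V) ≃ₗ[k] k := PiTensorProduct.isEmptyEquiv (Fin 0)
    constructor
    · exact Module.Finite.equiv e.symm
    · rw [e.finrank_eq, Module.finrank_self, pow_zero]
  | succ n ih =>
    obtain ⟨ihf, ihr⟩ := ih
    have e1 : (⨂[k]^1 V) ≃ₗ[k] V := PiTensorProduct.subsingletonEquiv (0 : Fin 1)
    have e : ((⨂[k]^n V) ⊗[k] (⨂[k]^1 V)) ≃ₗ[k] (⨂[k]^(n+1) V) := TensorPower.mulEquiv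
    haveI : FiniteDimensional k (⨂[k]^n V) := ihf
    haveI : FiniteDimensional k (⨂[k]^1 V) := Module.Finite.equiv e1.symm
    constructor
    · exact Module.Finite.equiv e
    · rw [← e.finrank_eq, Module.finrank_tensorProduct, ihr, e1.finrank_eq, pow_succ]

end Rank

section SNlem
variable {k V Γ : Type*} [Field k] [AddCommGroup V] [Module k V] [Group Γ] [Finite Γ]
  [Nontrivial V] [FiniteDimensional k V]

/-- the defining set of `sN` -/
def SS (ρ : Γ → (V →ₗ[k] V)) (n : ℕ) : Set ℕ :=
  {m : ℕ | ∃ W : Fin m → Submodule k (⨂[k]^n V),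
    (∀ i, W i ≠ ⊥) ∧
    (∀ i (g : Γ), ∀ x ∈ W i, (PiTensorProduct.map fun _ : Fin n => ρ g) x ∈ W i) ∧
    DirectSum.IsInternal W}

lemma sN_eq (ρ : Γ → (V →ₗ[k] V)) (n : ℕ) : sN k ρ n = sSup (SS ρ n) := rfl

lemma SS_le {ρ : Γ → (V →ₗ[k] V)} {n m : ℕ} (hm : m ∈ SS ρ n) :
    m ≤ Module.finrank k V ^ n := by
  obtain ⟨W, hne, -, hint⟩ := hm
  haveI := (fd_finrank_pow k V n).1
  choose x hx hx0 using fun i => (Submodule.ne_bot_iff (W i)).mp (hne i)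
  have hli := iSupIndep.linearIndependent W hint.submodule_iSupIndep hx hx0
  have h2 := hli.fintype_card_le_finrank
  rwa [Fintype.card_fin, (fd_finrank_pow k V n).2] at h2

lemma one_mem_SS (ρ : Γ → (V →ₗ[k] V)) (n : ℕ) : 1 ∈ SS ρ n := by
  haveI := (fd_finrank_pow k V n).1
  haveI : Nontrivial (⨂[k]^n V) := by
    apply Module.nontrivial_of_finrank_pos (R := k)
    rw [(fd_finrank_pow k V n).2]
    exact pow_pos Module.finrank_pos n
  refine ⟨fun _ => ⊤, fun i => ?_, fun i g x _ => Submodule.mem_top, ?_⟩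
  · rw [Submodule.ne_bot_iff]
    obtain ⟨v, hv⟩ := exists_ne (0 : ⨂[k]^n V)
    exact ⟨v, Submodule.mem_top, hv⟩
  · apply DirectSum.isInternal_submodule_of_iSupIndep_of_iSup_eq_top
    · intro i
      have hbot : (⨆ j, ⨆ (_ : j ≠ i), (⊤ : Submodule k (⨂[k]^n V))) = ⊥ := by
        rw [iSup_eq_bot]
        intro j
        rw [iSup_neg]
        simp [Subsingleton.elim j i]
      rw [hbot]
      exact disjoint_bot_right
    · exact le_antisymm le_top (le_iSup (fun _ : Fin 1 => (⊤ : Submodule k (⨂[k]^n V))) 0)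

lemma sN_le_pow (ρ : Γ → (V →ₗ[k] V)) (n : ℕ) : sN k ρ n ≤ Module.finrank k V ^ n := by
  rw [sN_eq]
  exact csSup_le ⟨1, one_mem_SS ρ n⟩ fun m hm => SS_le hm

lemma pow_le_sN (π : Γ →* Module.End k V) (n' : ℕ) :
    Module.finrank k V ^ n' ≤ sN k (fun g => π g) (Fintype.card (Γ × Γ) + n') := by
  rw [sN_eq]
  apply le_csSup
  · exact ⟨Module.finrank k V ^ (Fintype.card (Γ × Γ) + n'), fun m hm => SS_le hm⟩
  · exact grand_mem π n'

end SNlem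
end SNproof

attribute [local instance] Fintype.ofFinite

theorem stmt0 (k : Type*) [Field k] (Γ : Type*) [Group Γ] [Finite Γ]
    (V : Type*) [AddCommGroup V] [Module k V] [FiniteDimensional k V] [Nontrivial V]
    (ρ : Γ →* LinearMap.GeneralLinearGroup k V) :
    Filter.Tendsto (fun n : ℕ => (sN k (fun g => (ρ g : V →ₗ[k] V)) n : ℝ) ^ ((n : ℝ)⁻¹))
      Filter.atTop (nhds (Module.finrank k V)) := by
  classical
  set d : ℕ := Module.finrank k V with hd
  have hd1 : 1 ≤ d := Module.finrank_pos
  set L : ℕ := Fintype.card (Γ × Γ) with hL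
  set ρ' : Γ → (V →ₗ[k] V) := fun g => (ρ g : V →ₗ[k] V) with hρ'
  set π : Γ →* Module.End k V := (Units.coeHom (Module.End k V)).comp ρ with hπ
  have hupp : ∀ n : ℕ, sN k ρ' n ≤ d ^ n := fun n => SNproof.sN_le_pow ρ' n
  have hlow : ∀ n : ℕ, L ≤ n → d ^ (n - L) ≤ sN k ρ' n := by
    intro n hn
    have h1 := SNproof.pow_le_sN π (n - L)
    rw [Nat.add_sub_cancel' hn] at h1
    exact h1
  have hdR : (1 : ℝ) ≤ (d : ℝ) := by exact_mod_cast hd1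
  have hdR0 : (0 : ℝ) < (d : ℝ) := lt_of_lt_of_le zero_lt_one hdR
  have hub : ∀ᶠ n : ℕ in Filter.atTop, (sN k ρ' n : ℝ) ^ ((n : ℝ)⁻¹) ≤ (d : ℝ) := by
    filter_upwards [Filter.eventually_ge_atTop 1] with n hn
    have h0 : (0 : ℝ) ≤ (sN k ρ' n : ℝ) := Nat.cast_nonneg _
    have h1 : (sN k ρ' n : ℝ) ≤ ((d : ℝ)) ^ (n : ℕ) := by exact_mod_cast hupp n
    have h2 : (sN k ρ' n : ℝ) ^ ((n : ℝ)⁻¹) ≤ ((d : ℝ) ^ (n : ℕ)) ^ ((n : ℝ)⁻¹) :=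
      Real.rpow_le_rpow h0 h1 (by positivity)
    rw [← Real.rpow_natCast (d : ℝ) n, ← Real.rpow_mul hdR0.le,
      mul_inv_cancel₀ (show ((n : ℕ) : ℝ) ≠ 0 from Nat.cast_ne_zero.mpr (by omega)),
      Real.rpow_one] at h2
    exact h2
  have hlb : ∀ᶠ n : ℕ in Filter.atTop,
      (d : ℝ) ^ (1 - (L : ℝ) * (n : ℝ)⁻¹) ≤ (sN k ρ' n : ℝ) ^ ((n : ℝ)⁻¹) := by
    filter_upwards [Filter.eventually_ge_atTop (max L 1)] with n hn
    have hnL : L ≤ n := le_trans (le_max_left _ _) hn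
    have hn1 : 1 ≤ n := le_trans (le_max_right _ _) hn
    have hn0 : ((n : ℕ) : ℝ) ≠ 0 := Nat.cast_ne_zero.mpr (by omega)
    have h1 : ((d ^ (n - L) : ℕ) : ℝ) ≤ (sN k ρ' n : ℝ) := by exact_mod_cast hlow n hnL
    have h2 := Real.rpow_le_rpow (by positivity) h1 (inv_nonneg.mpr (Nat.cast_nonneg n))
    have h3 : ((d ^ (n - L) : ℕ) : ℝ) ^ ((n : ℝ)⁻¹) = (d : ℝ) ^ (1 - (L : ℝ) * (n : ℝ)⁻¹) := by
      push_cast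
      rw [← Real.rpow_natCast (d : ℝ) (n - L), ← Real.rpow_mul hdR0.le]
      congr 1
      rw [Nat.cast_sub hnL]
      field_simp
    rw [h3] at h2
    exact h2
  have hexp : Filter.Tendsto (fun n : ℕ => 1 - (L : ℝ) * (n : ℝ)⁻¹) Filter.atTop (nhds 1) := by
    have h1 : Filter.Tendsto (fun n : ℕ => ((n : ℝ))⁻¹) Filter.atTop (nhds 0) :=
      tendsto_inv_atTop_nhds_zero_nat
    have h2 := h1.const_mul (L : ℝ)
    rw [mul_zero] at h2
    have h3 := h2.const_sub 1
    rw [sub_zero] at h3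
    exact h3
  have hglim : Filter.Tendsto (fun n : ℕ => (d : ℝ) ^ (1 - (L : ℝ) * (n : ℝ)⁻¹))
      Filter.atTop (nhds ((d : ℝ))) := by
    have hcont : ContinuousAt (fun x : ℝ => (d : ℝ) ^ x) 1 :=
      Real.continuousAt_const_rpow (ne_of_gt hdR0)
    have h4 := hcont.tendsto.comp hexp
    rwa [Real.rpow_one] at h4
  exact tendsto_of_tendsto_of_tendsto_of_le_of_le' hglim tendsto_const_nhds hlb hub
end

section
/- Let Γ be a monoid, k a field, and V a finite-dimensional k-linear representation of Γ. Then the sequence (s_n(Γ,V)) is supermultiplicative: for all n, m ∈ ℕ one has s_n(Γ,V)·s_m(Γ,V) ≤ s_{n+m}(Γ,V). (Concretely: if V^⊗n is an internal direct sum of a family of a nonzero Γ-invariant subspaces and V^⊗m of b such subspaces, then under the canonical Γ-equivariant isomorphism V^⊗(n+m) ≅ V^⊗n ⊗ V^⊗m, the pairwise tensor products give an internal direct sum decomposition of V^⊗(n+m) into a·b nonzero Γ-invariant subspaces.) -/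
open scoped TensorProduct DirectSum

section Helpers

variable {k : Type*} [Field k]

private noncomputable def powAddEquiv (k : Type*) [Field k] (V : Type*) [AddCommGroup V]
    [Module k V] (n m : ℕ) :
    ((⨂[k]^n V) ⊗[k] (⨂[k]^m V)) ≃ₗ[k] ⨂[k]^(n+m) V :=
  (PiTensorProduct.tmulEquiv k V).trans
    (PiTensorProduct.reindex k (fun _ : Fin n ⊕ Fin m => V) finSumFinEquiv)

private lemma powAddEquiv_map {V : Type*} [AddCommGroup V] [Module k V] (n m : ℕ)
    (f : V →ₗ[k] V) :
    (PiTensorProduct.map fun _ : Fin (n+m) => f) ∘ₗ (powAddEquiv k V n m).toLinearMap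
      = (powAddEquiv k V n m).toLinearMap ∘ₗ
        TensorProduct.map (PiTensorProduct.map fun _ : Fin n => f)
          (PiTensorProduct.map fun _ : Fin m => f) := by
  ext a b
  simp [powAddEquiv, PiTensorProduct.tmulEquiv_apply, PiTensorProduct.reindex_tprod]
  congr 1
  funext i
  rcases h : finSumFinEquiv.symm i with j | j <;> simp

private lemma piTensor_finite (k : Type*) [Field k] (V : Type*) [AddCommGroup V] [Module k V]
    [FiniteDimensional k V] (n : ℕ) : Module.Finite k (⨂[k]^n V) := by
  induction n with
  | zero => exact Module.Finite.equiv (PiTensorProduct.isEmptyEquiv (Fin 0)).symm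
  | succ n ih =>
    haveI := ih
    haveI : Module.Finite k (⨂[k]^1 V) :=
      Module.Finite.equiv (PiTensorProduct.subsingletonEquiv (0 : Fin 1)).symm
    exact Module.Finite.equiv (powAddEquiv k V n 1)

private lemma tmul_ne_zero' {A B : Type*} [AddCommGroup A] [Module k A]
    [AddCommGroup B] [Module k B] {a : A} {b : B} (ha : a ≠ 0) (hb : b ≠ 0) :
    a ⊗ₜ[k] b ≠ (0 : A ⊗[k] B) := by
  obtain ⟨f, hf⟩ : ∃ f : Module.Dual k A, f a ≠ 0 := by
    by_contra h; push_neg at h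
    exact ha ((Module.forall_dual_apply_eq_zero_iff k a).mp h)
  obtain ⟨g, hg⟩ : ∃ g : Module.Dual k B, g b ≠ 0 := by
    by_contra h; push_neg at h
    exact hb ((Module.forall_dual_apply_eq_zero_iff k b).mp h)
  intro h
  have := congrArg (fun z => TensorProduct.lid k k (TensorProduct.map f g z)) h
  simp only [TensorProduct.map_tmul, TensorProduct.lid_tmul, smul_eq_mul, map_zero] at this
  exact mul_ne_zero hf hg this

private lemma map_mem_range_mapIncl {A B : Type*} [AddCommGroup A] [Module k A]
    [AddCommGroup B] [Module k B] (F : A →ₗ[k] A) (G : B →ₗ[k] B)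
    {W : Submodule k A} {U : Submodule k B}
    (hF : ∀ x ∈ W, F x ∈ W) (hG : ∀ x ∈ U, G x ∈ U) :
    ∀ y ∈ LinearMap.range (TensorProduct.mapIncl W U),
      TensorProduct.map F G y ∈ LinearMap.range (TensorProduct.mapIncl W U) := by
  rintro _ ⟨z, rfl⟩
  refine ⟨TensorProduct.map (F.restrict hF) (G.restrict hG) z, ?_⟩
  rw [← LinearMap.comp_apply, ← LinearMap.comp_apply, TensorProduct.mapIncl,
    ← TensorProduct.map_comp, ← TensorProduct.map_comp]
  congr 1

private lemma isInternal_tensor {A B : Type*} [AddCommGroup A] [Module k A]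
    [AddCommGroup B] [Module k B] {ιa ιb : Type*} [DecidableEq ιa] [DecidableEq ιb]
    (W : ιa → Submodule k A) (U : ιb → Submodule k B)
    (hW : DirectSum.IsInternal W) (hU : DirectSum.IsInternal U) :
    DirectSum.IsInternal (fun p : ιa × ιb =>
      LinearMap.range (TensorProduct.mapIncl (W p.1) (U p.2))) := by
  classical
  set T := fun p : ιa × ιb => LinearMap.range (TensorProduct.mapIncl (W p.1) (U p.2)) with hT
  have inj : ∀ p : ιa × ιb, Function.Injective (TensorProduct.mapIncl (W p.1) (U p.2)) :=
    fun p => Module.Flat.tensorProduct_mapIncl_injective_of_right _ _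
  let q : ∀ p : ιa × ιb, ((W p.1) ⊗[k] (U p.2)) ≃ₗ[k] T p := fun p =>
    LinearEquiv.ofInjective _ (inj p)
  let bigE : DirectSum (ιa × ιb) (fun p => (W p.1) ⊗[k] (U p.2)) ≃ₗ[k]
      DirectSum (ιa × ιb) (fun p => T p) :=
    DFinsupp.mapRange.linearEquiv q
  let eW : (⨁ i, W i) ≃ₗ[k] A := LinearEquiv.ofBijective (DirectSum.coeLinearMap W) hW
  let eU : (⨁ j, U j) ≃ₗ[k] B := LinearEquiv.ofBijective (DirectSum.coeLinearMap U) hU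
  let D := TensorProduct.directSum k k (fun i => W i) (fun j => U j)
  let Φ : DirectSum (ιa × ιb) (fun p => (W p.1) ⊗[k] (U p.2)) →ₗ[k] A ⊗[k] B :=
    (TensorProduct.congr eW eU).toLinearMap ∘ₗ D.symm.toLinearMap
  have key : (DirectSum.coeLinearMap T) ∘ₗ (bigE : _ →ₗ[k] _) = Φ := by
    refine DirectSum.linearMap_ext k fun p => ?_
    obtain ⟨i, j⟩ := p
    ext w u
    show DirectSum.coeLinearMap T (bigE (DirectSum.lof k _ _ (i, j) (w ⊗ₜ u))) =
      (TensorProduct.congr eW eU) (D.symm (DirectSum.lof k _ _ (i, j) (w ⊗ₜ u)))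
    have h1 : bigE (DirectSum.lof k _ _ (i, j) (w ⊗ₜ u))
        = DirectSum.lof k _ _ (i, j) (q (i, j) (w ⊗ₜ u)) :=
      DFinsupp.mapRange_single (hf := fun p => (q p).map_zero)
    have h2 : D.symm (DirectSum.lof k _ _ (i, j) (w ⊗ₜ u)) =
        (DirectSum.lof k _ _ i w) ⊗ₜ (DirectSum.lof k _ _ j u) :=
      TensorProduct.directSum_symm_lof_tmul k k (M₁ := fun i => ↥(W i))
        (M₂ := fun j => ↥(U j)) i w j u
    rw [h1, h2]
    simp only [DirectSum.lof_eq_of, DirectSum.coeLinearMap_of, TensorProduct.congr_tmul]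
    show (TensorProduct.mapIncl (W i) (U j)) (w ⊗ₜ u) = _
    simp [eW, eU, TensorProduct.mapIncl, DirectSum.coeLinearMap_of]
    exact congrArg₂ _ (DirectSum.coeLinearMap_of W i w).symm (DirectSum.coeLinearMap_of U j u).symm
  have hΦ : Function.Bijective Φ :=
    (TensorProduct.congr eW eU).bijective.comp D.symm.bijective
  have h3 : DirectSum.coeLinearMap T = Φ ∘ₗ (bigE.symm : _ →ₗ[k] _) := by
    rw [← key]; ext x; simp
  show Function.Bijective (DirectSum.coeLinearMap T)
  rw [h3]
  exact hΦ.comp bigE.symm.bijective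

end Helpers

theorem stmt5 (k : Type*) [Field k] (Γ : Type*) [Monoid Γ]
    (V : Type*) [AddCommGroup V] [Module k V] [FiniteDimensional k V]
    (ρ : Γ →* Module.End k V) :
    ∀ n m : ℕ, sN k (fun g => ρ g) n * sN k (fun g => ρ g) m ≤ sN k (fun g => ρ g) (n + m) := by
  classical
  intro n m
  haveI : ∀ p : ℕ, Module.Finite k (⨂[k]^p V) := piTensor_finite k V
  set S : ℕ → Set ℕ := fun p => {c : ℕ | ∃ W : Fin c → Submodule k (⨂[k]^p V),
    (∀ i, W i ≠ ⊥) ∧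
    (∀ i (g : Γ), ∀ x ∈ W i, (PiTensorProduct.map fun _ : Fin p => ρ g) x ∈ W i) ∧
    DirectSum.IsInternal W} with hS
  have hbdd : ∀ p : ℕ, BddAbove (S p) := by
    intro p
    refine ⟨Module.finrank k (⨂[k]^p V), fun c hc => ?_⟩
    obtain ⟨W, hne, -, hint⟩ := hc
    have hcard : Fintype.card {i : Fin c // W i ≠ ⊥} ≤ Module.finrank k (⨂[k]^p V) :=
      hint.submodule_iSupIndep.subtype_ne_bot_le_finrank
    rwa [Fintype.card_congr (Equiv.subtypeUnivEquiv hne), Fintype.card_fin] at hcard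
  show sSup (S n) * sSup (S m) ≤ sSup (S (n + m))
  rcases Set.eq_empty_or_nonempty (S n) with hSn | hSn
  · simp [hSn, csSup_empty]
  rcases Set.eq_empty_or_nonempty (S m) with hSm | hSm
  · simp [hSm, csSup_empty]
  have key : ∀ a b : ℕ, a ∈ S n → b ∈ S m → a * b ∈ S (n + m) := by
    rintro a b ⟨W, hWne, hWinv, hWint⟩ ⟨U, hUne, hUinv, hUint⟩
    let E := powAddEquiv k V n m
    let T : Fin a × Fin b → Submodule k (⨂[k]^(n+m) V) := fun p =>
      Submodule.map E.toLinearMap (LinearMap.range (TensorProduct.mapIncl (W p.1) (U p.2)))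
    have hTint : DirectSum.IsInternal T := by
      have h0 := isInternal_tensor W U hWint hUint
      rw [DirectSum.isInternal_submodule_iff_iSupIndep_and_iSup_eq_top] at h0 ⊢
      obtain ⟨hind, hsup⟩ := h0
      constructor
      · exact (hind.map_orderIso (Submodule.orderIsoMapComap E) : _)
      · rw [← Submodule.map_iSup, hsup, Submodule.map_top, LinearEquiv.range]
    have hTne : ∀ p : Fin a × Fin b, T p ≠ ⊥ := by
      rintro ⟨i, j⟩ h
      obtain ⟨w, hwW, hw0⟩ := Submodule.exists_mem_ne_zero_of_ne_bot (hWne i)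
      obtain ⟨u, huU, hu0⟩ := Submodule.exists_mem_ne_zero_of_ne_bot (hUne j)
      have hmem : E (w ⊗ₜ[k] u) ∈ T (i, j) :=
        ⟨w ⊗ₜ u, ⟨(⟨w, hwW⟩ : W i) ⊗ₜ (⟨u, huU⟩ : U j), rfl⟩, rfl⟩
      rw [h, Submodule.mem_bot] at hmem
      exact tmul_ne_zero' hw0 hu0 (E.map_eq_zero_iff.mp hmem)
    have hTinv : ∀ (p : Fin a × Fin b) (g : Γ), ∀ x ∈ T p,
        (PiTensorProduct.map fun _ : Fin (n+m) => ρ g) x ∈ T p := by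
      rintro ⟨i, j⟩ g _ ⟨y, hy, rfl⟩
      have heq := congrArg (fun (L : _ →ₗ[k] _) => L y) (powAddEquiv_map n m (ρ g))
      simp only [LinearMap.comp_apply, LinearEquiv.coe_coe] at heq
      simp only [LinearEquiv.coe_coe]
      rw [heq]
      exact Submodule.mem_map_of_mem
        (map_mem_range_mapIncl _ _ (hWinv i g) (hUinv j g) y hy)
    refine ⟨fun x => T (finProdFinEquiv.symm x), fun x => hTne _, fun x g => hTinv _ g, ?_⟩
    rw [DirectSum.isInternal_submodule_iff_iSupIndep_and_iSup_eq_top] at hTint ⊢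
    obtain ⟨hind, hsup⟩ := hTint
    exact ⟨hind.comp finProdFinEquiv.symm.injective,
      by rw [← hsup]; exact finProdFinEquiv.symm.surjective.iSup_comp (g := T)⟩
  exact le_csSup (hbdd (n + m)) (key _ _ (Nat.sSup_mem hSn (hbdd n)) (Nat.sSup_mem hSm (hbdd m)))
end

section
/- Let k be a finite field and let Γ = SL_2(k) (a finite group) act on V = k² by matrix–vector multiplication. Then there is a real constant A > 0 such that A·2^n ≤ s_n(Γ,V) ≤ 2^n for all n ∈ ℕ; that is, s_n(Γ,V) ∈ Θ'(2^n). -/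
open scoped TensorProduct

open scoped Classical
open PiTensorProduct Matrix
set_option linter.unusedSectionVars false
set_option maxHeartbeats 1000000

namespace SNaux

section ClaimC
variable {K : Type*} [Field K]
lemma prop_of_cross_zero (x y : Fin 2 → K) (hx : x ≠ 0)
    (h : x 0 * y 1 - x 1 * y 0 = 0) : ∃ c : K, y = c • x := by
  rcases eq_or_ne (x 0) 0 with h0 | h0
  · have h1 : x 1 ≠ 0 := by
      intro h1; apply hx; funext i; fin_cases i <;> simp [h0, h1]
    refine ⟨y 1 / x 1, ?_⟩
    funext i
    fin_cases i
    · have hz : x 1 * y 0 = 0 := by linear_combination -h + y 1 * h0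
      have : y 0 = 0 := by
        rcases mul_eq_zero.mp hz with h' | h'
        · exact absurd h' h1
        · exact h'
      simp [this, h0, Pi.smul_apply]
    · show y 1 = y 1 / x 1 * x 1
      field_simp
  · refine ⟨y 0 / x 0, ?_⟩
    funext i
    fin_cases i
    · show y 0 = y 0 / x 0 * x 0
      field_simp
    · show y 1 = y 0 / x 0 * x 1
      field_simp
      linear_combination h
lemma exists_dual_pair (x y : Fin 2 → K) (hx : x ≠ 0)
    (h : ¬ ∃ c : K, y = c • x) : ∃ μ : Fin 2 → K, μ ⬝ᵥ x = 1 ∧ μ ⬝ᵥ y = 0 := by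
  have hD : x 0 * y 1 - x 1 * y 0 ≠ 0 := fun hD => h (prop_of_cross_zero x y hx hD)
  set D := x 0 * y 1 - x 1 * y 0 with hDdef
  refine ⟨![D⁻¹ * y 1, -(D⁻¹ * y 0)], ?_, ?_⟩
  · simp only [dotProduct, Fin.sum_univ_two, Matrix.cons_val_zero, Matrix.cons_val_one,
      Matrix.head_cons]
    field_simp
    ring
  · simp only [dotProduct, Fin.sum_univ_two, Matrix.cons_val_zero, Matrix.cons_val_one,
      Matrix.head_cons]
    ring

lemma claimC (A : Matrix (Fin 2) (Fin 2) K) (hdet : A.det = 1)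
    (hA : A ≠ 1) (hA' : A ≠ -1) :
    ∃ x μ : Fin 2 → K, μ ⬝ᵥ x = 1 ∧ μ ⬝ᵥ A.mulVec x = 0 := by
  by_contra hcon
  push_neg at hcon
  have key : ∀ x : Fin 2 → K, x ≠ 0 → ∃ c : K, A.mulVec x = c • x := by
    intro x hx
    by_contra hc
    obtain ⟨μ, h1, h2⟩ := exists_dual_pair x (A.mulVec x) hx hc
    exact hcon x μ h1 h2
  have e0 : (fun j => if (0:Fin 2) = j then (1:K) else 0) ≠ 0 := by
    intro h; have := congrFun h 0; simp at this
  have e1 : (fun j => if (1:Fin 2) = j then (1:K) else 0) ≠ 0 := by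
    intro h; have := congrFun h 1; simp at this
  have e2 : (fun _ : Fin 2 => (1:K)) ≠ 0 := by
    intro h; have := congrFun h 0; simp at this
  obtain ⟨c0, hc0⟩ := key _ e0
  obtain ⟨c1, hc1⟩ := key _ e1
  obtain ⟨c2, hc2⟩ := key _ e2
  have hA00 : A 0 0 = c0 := by
    have := congrFun hc0 0; simpa [mulVec, dotProduct, Fin.sum_univ_two] using this
  have hA10 : A 1 0 = 0 := by
    have := congrFun hc0 1; simpa [mulVec, dotProduct, Fin.sum_univ_two] using this
  have hA01 : A 0 1 = 0 := by
    have := congrFun hc1 0; simpa [mulVec, dotProduct, Fin.sum_univ_two] using this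
  have hA11 : A 1 1 = c1 := by
    have := congrFun hc1 1; simpa [mulVec, dotProduct, Fin.sum_univ_two] using this
  have h20 : A 0 0 + A 0 1 = c2 := by
    have := congrFun hc2 0; simpa [mulVec, dotProduct, Fin.sum_univ_two] using this
  have h21 : A 1 0 + A 1 1 = c2 := by
    have := congrFun hc2 1; simpa [mulVec, dotProduct, Fin.sum_univ_two] using this
  have hcc : c1 = c0 := by
    rw [hA00, hA01] at h20
    rw [hA10, hA11] at h21
    simp at h20 h21
    rw [h20, h21]
  have hdet2 : c0 * c0 = 1 := by
    rw [det_fin_two, hA00, hA01, hA10, hA11, hcc] at hdet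
    linear_combination hdet
  have : (c0 - 1) * (c0 + 1) = 0 := by ring_nf; linear_combination hdet2
  rcases mul_eq_zero.mp this with h | h
  · apply hA
    have hc : c0 = 1 := by linear_combination h
    ext i j
    fin_cases i <;> fin_cases j <;>
      simp [hA00, hA01, hA10, hA11, hcc, hc, Matrix.one_apply]
  · apply hA'
    have hc : c0 = -1 := by linear_combination h
    ext i j
    fin_cases i <;> fin_cases j <;>
      simp [hA00, hA01, hA10, hA11, hcc, hc, Matrix.one_apply]

end ClaimC


variable (k : Type*) [Field k] [Fintype k]

abbrev Vk := Fin 2 → k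
abbrev SL2 := Matrix.SpecialLinearGroup (Fin 2) k

noncomputable instance : Fintype (SL2 k) := Fintype.ofFinite _

noncomputable def rho (g : SL2 k) : Vk k →ₗ[k] Vk k :=
  Matrix.mulVecLin (g : Matrix (Fin 2) (Fin 2) k)

variable {k}

lemma rho_mul (g h : SL2 k) : rho k (g * h) = (rho k g) ∘ₗ (rho k h) := by
  simp [rho, Matrix.SpecialLinearGroup.coe_mul, Matrix.mulVecLin_mul]

lemma rho_one : rho k (1 : SL2 k) = LinearMap.id := by
  simp [rho, Matrix.SpecialLinearGroup.coe_one]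

/-- the pure tensor diagonal action -/
noncomputable def mapn (n : ℕ) (g : SL2 k) :
    (⨂[k]^n (Vk k)) →ₗ[k] (⨂[k]^n (Vk k)) :=
  PiTensorProduct.map (fun _ : Fin n => rho k g)

lemma mapn_mapn (n : ℕ) (g h : SL2 k) (x : ⨂[k]^n (Vk k)) :
    mapn n g (mapn n h x) = mapn n (g * h) x := by
  rw [mapn, mapn, mapn]
  rw [show (fun _ : Fin n => rho k (g*h)) = fun _ : Fin n => (rho k g) ∘ₗ (rho k h) by
    funext _; rw [rho_mul]]
  rw [PiTensorProduct.map_comp]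
  rfl

lemma mapn_one (n : ℕ) (x : ⨂[k]^n (Vk k)) : mapn n 1 x = x := by
  rw [mapn, show (fun _ : Fin n => rho k (1 : SL2 k)) = fun _ : Fin n => LinearMap.id by
    funext _; rw [rho_one]]
  rw [PiTensorProduct.map_id]
  rfl

noncomputable def dotL (μ : Vk k) : Vk k →ₗ[k] k := ∑ j, μ j • LinearMap.proj j

lemma dotL_apply (μ v : Vk k) : dotL μ v = μ ⬝ᵥ v := by
  simp [dotL, dotProduct, LinearMap.sum_apply]

def bvec (j : Fin 2) : Vk k := fun j' => if j = j' then 1 else 0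

variable (k)

/-- the index set of "free coordinate" pairs -/
def Sk := {p : (Vk k) × (Vk k) // p.2 ⬝ᵥ p.1 = 1}

instance : Finite (Sk k) := Subtype.finite

noncomputable instance : Fintype (Sk k) := Fintype.ofFinite _

abbrev Ik := Bool × Sk k

/-- the number of "free" coordinates -/
noncomputable def Mk : ℕ := Fintype.card (Ik k)

variable {k}

lemma Mk_even : Mk k = 2 * Fintype.card (Sk k) := by
  simp [Mk, Fintype.card_prod]

lemma neg_one_pow_Mk (r : ℕ) : ((-1 : k)) ^ (Mk k + r) = (-1 : k) ^ r := by
  rw [pow_add, Mk_even, pow_mul, neg_one_sq, one_pow, one_mul]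

variable (k)

/-- coordinate splitting -/
noncomputable def es (r : ℕ) : Fin (Mk k + r) ≃ (Ik k) ⊕ Fin r :=
  finSumFinEquiv.symm.trans (Equiv.sumCongr (Fintype.equivFin (Ik k)).symm (Equiv.refl (Fin r)))

variable {k}

variable {r : ℕ}

noncomputable def cvec (J : Fin r → Fin 2) : Fin (Mk k + r) → Vk k :=
  fun i => Sum.elim (fun s : Ik k => s.2.1.1) (fun t => bvec (J t)) (es k r i)

noncomputable def fvec (J : Fin r → Fin 2) : Fin (Mk k + r) → (Vk k →ₗ[k] k) :=
  fun i => Sum.elim (fun s : Ik k => dotL s.2.1.2) (fun t => LinearMap.proj (J t)) (es k r i)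

noncomputable def yJ (J : Fin r → Fin 2) : ⨂[k]^(Mk k + r) (Vk k) := tprod k (cvec J)

noncomputable def θJ (J : Fin r → Fin 2) :
    (⨂[k]^(Mk k + r) (Vk k)) →ₗ[k] (⨂[k]^(Mk k + r) (Vk k)) :=
  PiTensorProduct.map (fun i => (fvec J i).smulRight (cvec J i))

lemma theta_tprod (J : Fin r → Fin 2) (m : Fin (Mk k + r) → Vk k) :
    θJ J (tprod k m) = (∏ i, fvec J i (m i)) • yJ J := by
  rw [θJ, PiTensorProduct.map_tprod]
  rw [show (fun i => (fvec J i).smulRight (cvec J i) (m i))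
      = fun i => (fvec J i (m i)) • cvec J i from rfl]
  exact MultilinearMap.map_smul_univ _ _ _

/-- the key matrix-coefficient product -/
noncomputable def cS (g : SL2 k) (J J' : Fin r → Fin 2) : k :=
  ∏ i, fvec J i (rho k g (cvec J' i))

lemma prod_split (G : (Ik k) ⊕ Fin r → k) :
    (∏ i : Fin (Mk k + r), G (es k r i))
      = (∏ s : Ik k, G (.inl s)) * ∏ t : Fin r, G (.inr t) := by
  rw [Equiv.prod_comp (es k r) G, Fintype.prod_sum_type]

lemma cS_eq (g : SL2 k) (J J' : Fin r → Fin 2) :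
    cS g J J' = (∏ s : Ik k, dotL s.2.1.2 (rho k g s.2.1.1))
      * ∏ t : Fin r, (rho k g (bvec (J' t))) (J t) := by
  rw [cS]
  exact prod_split (fun u => (Sum.elim (fun s : Ik k => dotL s.2.1.2)
    (fun t => LinearMap.proj (J t)) u) (rho k g ((Sum.elim (fun s : Ik k => s.2.1.1)
    (fun t => bvec (J' t))) u)))


noncomputable def zc : Matrix.SpecialLinearGroup (Fin 2) k :=
  ⟨-1, by rw [det_neg, det_one]; norm_num⟩

lemma zc_coe : (zc (k := k) : Matrix (Fin 2) (Fin 2) k) = -1 := rfl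

lemma rho_zc : rho k (zc (k := k)) = -LinearMap.id := by
  refine LinearMap.ext fun v => ?_
  show Matrix.mulVecLin (zc (k:=k) : Matrix (Fin 2) (Fin 2) k) v = _
  rw [Matrix.mulVecLin_apply, zc_coe, Matrix.neg_mulVec, Matrix.one_mulVec]
  rfl

lemma zc_mul_zc : (zc (k := k)) * zc = 1 := by
  apply Subtype.ext
  rw [Matrix.SpecialLinearGroup.coe_mul, zc_coe]
  simp

lemma zc_inv : (zc (k := k))⁻¹ = zc := inv_eq_of_mul_eq_one_right zc_mul_zc

noncomputable def czf : k := if (zc (k := k)) = 1 then 1 else 2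

lemma czf_ne : (czf (k := k)) ≠ 0 := by
  rw [czf]
  split_ifs with h
  · exact one_ne_zero
  · intro h2
    apply h
    apply Subtype.ext
    rw [zc_coe, Matrix.SpecialLinearGroup.coe_one]
    ext i j
    show -((1 : Matrix (Fin 2) (Fin 2) k) i j) = _
    rw [neg_eq_iff_add_eq_zero, ← two_mul, h2, zero_mul]

lemma coe_ne_one {g : SL2 k} (h : g ≠ 1) : (g : Matrix (Fin 2) (Fin 2) k) ≠ 1 := by
  intro hc
  exact h (Subtype.ext (by rw [hc, Matrix.SpecialLinearGroup.coe_one]))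

lemma coe_ne_negone {g : SL2 k} (h : g ≠ zc) : (g : Matrix (Fin 2) (Fin 2) k) ≠ -1 := by
  intro hc
  exact h (Subtype.ext (by rw [hc, zc_coe]))

lemma cS_zero {g : SL2 k} (hg1 : g ≠ 1) (hgz : g ≠ zc) (J J' : Fin r → Fin 2) :
    cS g J J' = 0 := by
  rw [cS_eq]
  obtain ⟨x, μ, h1, h2⟩ := claimC (g : Matrix (Fin 2) (Fin 2) k) g.2
    (coe_ne_one hg1) (coe_ne_negone hgz)
  have : (∏ s : Ik k, dotL s.2.1.2 (rho k g s.2.1.1)) = 0 := by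
    apply Finset.prod_eq_zero (Finset.mem_univ ((true, ⟨(x, μ), h1⟩) : Ik k))
    show dotL μ (rho k g x) = 0
    rw [dotL_apply, rho, Matrix.mulVecLin_apply, h2]
  rw [this, zero_mul]

lemma cS_one (J J' : Fin r → Fin 2) :
    cS (1 : SL2 k) J J' = if J = J' then 1 else 0 := by
  rw [cS_eq, rho_one]
  simp only [LinearMap.id_coe, id_eq]
  have h1 : (∏ s : Ik k, dotL s.2.1.2 s.2.1.1) = 1 := by
    apply Finset.prod_eq_one
    intro s _
    rw [dotL_apply]
    exact s.2.2
  rw [h1, one_mul]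
  by_cases h : J = J'
  · subst h
    rw [if_pos rfl]
    apply Finset.prod_eq_one
    intro t _
    simp [bvec]
  · rw [if_neg h]
    obtain ⟨t, ht⟩ := Function.ne_iff.mp h
    apply Finset.prod_eq_zero (Finset.mem_univ t)
    simp [bvec, if_neg (Ne.symm ht)]

lemma neg_one_pow_Mk' : ((-1 : k)) ^ (Mk k) = 1 := by
  rw [Mk_even, pow_mul, neg_one_sq, one_pow]

lemma cS_zc (J J' : Fin r → Fin 2) :
    cS (zc : SL2 k) J J' = if J = J' then ((-1 : k)) ^ r else 0 := by
  rw [cS_eq, rho_zc]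
  simp only [LinearMap.neg_apply, LinearMap.id_coe, id_eq, map_neg]
  have h1 : (∏ s : Ik k, -(dotL s.2.1.2 s.2.1.1)) = 1 := by
    have : ∀ s : Ik k, -(dotL s.2.1.2 s.2.1.1) = -1 := fun s => by
      rw [dotL_apply]; rw [s.2.2]
    rw [Finset.prod_congr rfl (fun s _ => this s), Finset.prod_const]
    simp [neg_one_pow_Mk' (k := k), Mk]
  rw [h1, one_mul]
  have h2 : (∏ t : Fin r, (-(bvec (J' t) : Vk k)) (J t))
      = ((-1 : k)) ^ r * ∏ t : Fin r, (bvec (J' t) : Vk k) (J t) := by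
    have : ∀ t : Fin r, (-(bvec (J' t) : Vk k)) (J t) = (-1) * (bvec (J' t) : Vk k) (J t) :=
      fun t => by simp
    rw [Finset.prod_congr rfl (fun t _ => this t), Finset.prod_mul_distrib, Finset.prod_const]
    simp
  rw [h2]
  by_cases h : J = J'
  · subst h
    rw [if_pos rfl]
    have : (∏ t : Fin r, (bvec (J t) : Vk k) (J t)) = 1 := by
      apply Finset.prod_eq_one; intro t _; simp [bvec]
    rw [this, mul_one]
  · rw [if_neg h]
    obtain ⟨t, ht⟩ := Function.ne_iff.mp h
    have : (∏ t : Fin r, (bvec (J' t) : Vk k) (J t)) = 0 := by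
      apply Finset.prod_eq_zero (Finset.mem_univ t)
      simp [bvec, if_neg (Ne.symm ht)]
    rw [this, mul_zero]

lemma mapn_zc_yJ (J : Fin r → Fin 2) :
    mapn (Mk k + r) zc (yJ J) = ((-1 : k)) ^ r • yJ J := by
  rw [yJ, mapn, PiTensorProduct.map_tprod, rho_zc]
  have : (fun i => (-LinearMap.id : Vk k →ₗ[k] Vk k) (cvec J i))
      = fun i => (-1 : k) • (cvec J i) := by
    funext i; simp
  rw [this, MultilinearMap.map_smul_univ]
  rw [Finset.prod_const, Finset.card_univ, Fintype.card_fin, neg_one_pow_Mk]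

noncomputable def pJ (J : Fin r → Fin 2) :
    (⨂[k]^(Mk k + r) (Vk k)) →ₗ[k] (⨂[k]^(Mk k + r) (Vk k)) :=
  (czf (k := k))⁻¹ • ∑ g : SL2 k, (mapn (Mk k + r) g) ∘ₗ (θJ J) ∘ₗ (mapn (Mk k + r) g⁻¹)

lemma pJ_apply (J : Fin r → Fin 2) (x : ⨂[k]^(Mk k + r) (Vk k)) :
    pJ J x = (czf (k := k))⁻¹ • ∑ g : SL2 k, mapn (Mk k + r) g (θJ J (mapn (Mk k + r) g⁻¹ x)) := by
  simp [pJ, LinearMap.sum_apply]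

lemma theta_on_orbit (J J' : Fin r → Fin 2) (g : SL2 k) :
    θJ J (mapn (Mk k + r) g (yJ J')) = cS g J J' • yJ J := by
  rw [yJ, mapn, PiTensorProduct.map_tprod, theta_tprod, cS]

lemma pJ_on_orbit (J J' : Fin r → Fin 2) (h : SL2 k) :
    pJ J (mapn (Mk k + r) h (yJ J')) = if J = J' then mapn (Mk k + r) h (yJ J') else 0 := by
  have step1 : pJ J (mapn (Mk k + r) h (yJ J'))
      = (czf (k := k))⁻¹ • ∑ g : SL2 k, cS (g⁻¹ * h) J J' • mapn (Mk k + r) g (yJ J) := by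
    rw [pJ_apply]
    congr 1
    apply Finset.sum_congr rfl
    intro g _
    rw [mapn_mapn, theta_on_orbit, LinearMap.map_smul]
  rw [step1]
  have step2 : (∑ g : SL2 k, cS (g⁻¹ * h) J J' • mapn (Mk k + r) g (yJ J))
      = ∑ u : SL2 k, cS u J J' • mapn (Mk k + r) (h * u⁻¹) (yJ J) := by
    refine (Fintype.sum_equiv ((Equiv.inv (SL2 k)).trans (Equiv.mulLeft h))
      (fun u => cS u J J' • mapn (Mk k + r) (h * u⁻¹) (yJ J))
      (fun g => cS (g⁻¹ * h) J J' • mapn (Mk k + r) g (yJ J)) ?_).symm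
    intro u
    have h1 : ((h * u⁻¹)⁻¹ * h) = u := by group
    simp only [Equiv.trans_apply, Equiv.inv_apply, Equiv.coe_mulLeft]
    rw [h1]
  rw [step2]
  by_cases hJ : J = J'
  · subst hJ
    rw [if_pos rfl]
    by_cases hz : (zc : SL2 k) = 1
    · have hsum : (∑ u : SL2 k, cS u J J • mapn (Mk k + r) (h * u⁻¹) (yJ J))
          = mapn (Mk k + r) h (yJ J) := by
        rw [Finset.sum_eq_single 1]
        · rw [cS_one, if_pos rfl, one_smul, inv_one, mul_one]
        · intro u _ hu
          rw [cS_zero hu (fun hc => hu (hc.trans hz)), zero_smul]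
        · intro habs; exact absurd (Finset.mem_univ _) habs
      rw [hsum, czf, if_pos hz, inv_one, one_smul]
    · have hsub : (∑ u : SL2 k, cS u J J • mapn (Mk k + r) (h * u⁻¹) (yJ J))
          = ∑ u ∈ ({1, zc} : Finset (SL2 k)), cS u J J • mapn (Mk k + r) (h * u⁻¹) (yJ J) := by
        symm
        apply Finset.sum_subset (Finset.subset_univ _)
        intro u _ hu
        simp only [Finset.mem_insert, Finset.mem_singleton] at hu
        push_neg at hu
        rw [cS_zero hu.1 hu.2, zero_smul]
      rw [hsub]
      have h1z : (1 : SL2 k) ∉ ({zc} : Finset (SL2 k)) := by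
        simp [Ne.symm hz]
      rw [show ({1, zc} : Finset (SL2 k)) = insert 1 {zc} from rfl,
        Finset.sum_insert h1z, Finset.sum_singleton]
      rw [cS_one, if_pos rfl, one_smul, inv_one, mul_one]
      rw [cS_zc, if_pos rfl, zc_inv]
      have hmz : mapn (Mk k + r) (h * zc) (yJ J) = ((-1 : k)) ^ r • mapn (Mk k + r) h (yJ J) := by
        rw [← mapn_mapn, mapn_zc_yJ, LinearMap.map_smul]
      rw [hmz, smul_smul, ← mul_pow, neg_mul_neg, one_mul, one_pow, one_smul]
      rw [← two_smul k (mapn (Mk k + r) h (yJ J))]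
      have hczf : (czf (k := k)) = 2 := by rw [czf, if_neg hz]
      have h2ne : (2 : k) ≠ 0 := by
        have := czf_ne (k := k); rwa [hczf] at this
      rw [hczf, inv_smul_smul₀ h2ne]
  · rw [if_neg hJ]
    have hall : ∀ u : SL2 k, cS u J J' • mapn (Mk k + r) (h * u⁻¹) (yJ J) = 0 := by
      intro u
      rcases eq_or_ne u 1 with rfl | hu1
      · rw [cS_one, if_neg hJ, zero_smul]
      rcases eq_or_ne u zc with rfl | huz
      · rw [cS_zc, if_neg hJ, zero_smul]
      · rw [cS_zero hu1 huz, zero_smul]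
    rw [Finset.sum_congr rfl (fun u _ => hall u), Finset.sum_const]
    simp

noncomputable def U (J : Fin r → Fin 2) : Submodule k (⨂[k]^(Mk k + r) (Vk k)) :=
  Submodule.span k (Set.range fun g : SL2 k => mapn (Mk k + r) g (yJ J))

lemma U_inv (J : Fin r → Fin 2) (h : SL2 k) {x : ⨂[k]^(Mk k + r) (Vk k)} (hx : x ∈ U J) :
    mapn (Mk k + r) h x ∈ U J := by
  induction hx using Submodule.span_induction with
  | mem x hx =>
    obtain ⟨g, rfl⟩ := hx
    rw [mapn_mapn]
    exact Submodule.subset_span ⟨h * g, rfl⟩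
  | zero => rw [map_zero]; exact Submodule.zero_mem _
  | add a b _ _ ha hb => rw [map_add]; exact Submodule.add_mem _ ha hb
  | smul c a _ ha => rw [LinearMap.map_smul]; exact Submodule.smul_mem _ _ ha

lemma yJ_mem (J : Fin r → Fin 2) : yJ J ∈ U (k := k) J := by
  have : yJ J = mapn (Mk k + r) 1 (yJ J) := (mapn_one _ _).symm
  rw [this]
  exact Submodule.subset_span ⟨1, rfl⟩

noncomputable def pureF (n : ℕ) (fs : Fin n → (Vk k →ₗ[k] k)) : (⨂[k]^n (Vk k)) →ₗ[k] k :=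
  PiTensorProduct.lift ((MultilinearMap.mkPiAlgebra k (Fin n) k).compLinearMap fs)

lemma yJ_ne (J : Fin r → Fin 2) : yJ (k := k) J ≠ 0 := by
  intro h0
  have h1 : pureF (Mk k + r) (fvec J) (yJ J) = 1 := by
    rw [yJ, pureF]
    simp only [PiTensorProduct.lift.tprod, MultilinearMap.compLinearMap_apply,
      MultilinearMap.mkPiAlgebra_apply]
    have := prod_split (k := k) (r := r) (fun u =>
      (Sum.elim (fun s : Ik k => dotL s.2.1.2) (fun t => LinearMap.proj (J t)) u)
      ((Sum.elim (fun s : Ik k => s.2.1.1) (fun t => bvec (J t))) u))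
    rw [show (∏ i, fvec J i (cvec J i)) = ∏ i : Fin (Mk k + r),
      (Sum.elim (fun s : Ik k => dotL s.2.1.2) (fun t => LinearMap.proj (J t)) (es k r i))
      ((Sum.elim (fun s : Ik k => s.2.1.1) (fun t => bvec (J t))) (es k r i)) from rfl, this]
    have hl : (∏ s : Ik k, dotL s.2.1.2 s.2.1.1) = 1 :=
      Finset.prod_eq_one fun s _ => by rw [dotL_apply]; exact s.2.2
    have hr : (∏ t : Fin r, (bvec (J t) : Vk k) (J t)) = 1 :=
      Finset.prod_eq_one fun t _ => by simp [bvec]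
    simp only [Sum.elim_inl, Sum.elim_inr]
    rw [hl, one_mul]
    exact Finset.prod_eq_one fun t _ => by simp [bvec]
  rw [h0, map_zero] at h1
  exact zero_ne_one h1

lemma pJ_fix (J : Fin r → Fin 2) {x : ⨂[k]^(Mk k + r) (Vk k)} (hx : x ∈ U J) :
    pJ J x = x := by
  induction hx using Submodule.span_induction with
  | mem x hx =>
    obtain ⟨g, rfl⟩ := hx
    rw [pJ_on_orbit, if_pos rfl]
  | zero => rw [map_zero]
  | add a b _ _ ha hb => rw [map_add, ha, hb]
  | smul c a _ ha => rw [LinearMap.map_smul, ha]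

lemma pJ_kill {J J' : Fin r → Fin 2} (hJ : J ≠ J') {x : ⨂[k]^(Mk k + r) (Vk k)}
    (hx : x ∈ U J') : pJ J x = 0 := by
  induction hx using Submodule.span_induction with
  | mem x hx =>
    obtain ⟨g, rfl⟩ := hx
    rw [pJ_on_orbit, if_neg hJ]
  | zero => rw [map_zero]
  | add a b _ _ ha hb => rw [map_add, ha, hb, add_zero]
  | smul c a _ ha => rw [LinearMap.map_smul, ha, smul_zero]

lemma theta_mem (J : Fin r → Fin 2) (x : ⨂[k]^(Mk k + r) (Vk k)) :
    ∃ c : k, θJ J x = c • yJ J := by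
  induction x using PiTensorProduct.induction_on with
  | smul_tprod c m =>
    refine ⟨c * ∏ i, fvec J i (m i), ?_⟩
    rw [LinearMap.map_smul, theta_tprod, smul_smul]
  | add a b ha hb =>
    obtain ⟨c1, h1⟩ := ha
    obtain ⟨c2, h2⟩ := hb
    exact ⟨c1 + c2, by rw [map_add, h1, h2, add_smul]⟩

lemma pJ_mem (J : Fin r → Fin 2) (x : ⨂[k]^(Mk k + r) (Vk k)) : pJ J x ∈ U (k := k) J := by
  rw [pJ_apply]
  apply Submodule.smul_mem
  apply Submodule.sum_mem
  intro g _
  obtain ⟨c, hc⟩ := theta_mem J (mapn (Mk k + r) g⁻¹ x)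
  rw [hc, LinearMap.map_smul]
  exact Submodule.smul_mem _ _ (Submodule.subset_span ⟨g, rfl⟩)

noncomputable def pTot : (⨂[k]^(Mk k + r) (Vk k)) →ₗ[k] (⨂[k]^(Mk k + r) (Vk k)) :=
  ∑ J : Fin r → Fin 2, pJ J

lemma pTot_apply (x : ⨂[k]^(Mk k + r) (Vk k)) :
    pTot (r := r) x = ∑ J : Fin r → Fin 2, pJ J x := by
  simp [pTot, LinearMap.sum_apply]

lemma pTot_fix {J' : Fin r → Fin 2} {x : ⨂[k]^(Mk k + r) (Vk k)} (hx : x ∈ U J') :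
    pTot (r := r) x = x := by
  rw [pTot_apply]
  have : ∀ J : Fin r → Fin 2, pJ J x = if J = J' then x else 0 := by
    intro J
    by_cases h : J = J'
    · subst h; rw [if_pos rfl]; exact pJ_fix J hx
    · rw [if_neg h]; exact pJ_kill h hx
  rw [Finset.sum_congr rfl (fun J _ => this J), Finset.sum_ite_eq' Finset.univ J' (fun _ => x),
    if_pos (Finset.mem_univ _)]

lemma pJ_pTot (J : Fin r → Fin 2) (x : ⨂[k]^(Mk k + r) (Vk k)) :
    pJ J (pTot (r := r) x) = pJ J x := by
  rw [pTot_apply, map_sum]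
  have : ∀ J' : Fin r → Fin 2, pJ J (pJ J' x) = if J' = J then pJ J' x else 0 := by
    intro J'
    by_cases h : J' = J
    · subst h; rw [if_pos rfl]; exact pJ_fix J' (pJ_mem J' x)
    · rw [if_neg h]; exact pJ_kill (Ne.symm h) (pJ_mem J' x)
  rw [Finset.sum_congr rfl (fun J' _ => this J'), Finset.sum_ite_eq' Finset.univ J
    (fun J' => pJ J' x), if_pos (Finset.mem_univ _)]

lemma pTot_idem (x : ⨂[k]^(Mk k + r) (Vk k)) :
    pTot (r := r) (pTot (r := r) x) = pTot (r := r) x := by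
  conv_lhs => rw [pTot_apply (pTot (r := r) x)]
  rw [Finset.sum_congr rfl (fun J _ => pJ_pTot J x), ← pTot_apply]

lemma pJ_equi (J : Fin r → Fin 2) (h : SL2 k) (x : ⨂[k]^(Mk k + r) (Vk k)) :
    pJ J (mapn (Mk k + r) h x) = mapn (Mk k + r) h (pJ J x) := by
  rw [pJ_apply, pJ_apply, LinearMap.map_smul, map_sum]
  congr 1
  refine (Fintype.sum_equiv (Equiv.mulLeft h)
    (fun u => mapn (Mk k + r) h (mapn (Mk k + r) u (θJ J (mapn (Mk k + r) u⁻¹ x))))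
    (fun g => mapn (Mk k + r) g (θJ J (mapn (Mk k + r) g⁻¹ (mapn (Mk k + r) h x)))) ?_).symm
  intro u
  simp only [Equiv.coe_mulLeft]
  have e1 : mapn (Mk k + r) ((h * u)⁻¹) (mapn (Mk k + r) h x) = mapn (Mk k + r) u⁻¹ x := by
    rw [mapn_mapn]
    congr 1
    group
  rw [e1, mapn_mapn]

lemma pTot_equi (h : SL2 k) (x : ⨂[k]^(Mk k + r) (Vk k)) :
    pTot (r := r) (mapn (Mk k + r) h x) = mapn (Mk k + r) h (pTot (r := r) x) := by
  rw [pTot_apply, pTot_apply, map_sum]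
  exact Finset.sum_congr rfl fun J _ => pJ_equi J h x

lemma expand (n : ℕ) (m : Fin n → Vk k) :
    tprod k (s := fun _ : Fin n => Vk k) m
      = ∑ w : Fin n → Fin 2, (∏ i, m i (w i)) • tprod k (fun i => (bvec (w i) : Vk k)) := by
  conv_lhs => rw [show m = fun i => ∑ j, m i j • (bvec j : Vk k) from funext fun i => pi_eq_sum_univ (m i)]
  rw [MultilinearMap.map_sum]
  exact Finset.sum_congr rfl fun w _ => MultilinearMap.map_smul_univ _ _ _

lemma span_b_top (n : ℕ) :
    Submodule.span k (Set.range fun w : Fin n → Fin 2 => tprod k (fun i => (bvec (w i) : Vk k))) = ⊤ := by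
  rw [eq_top_iff, ← (span_tprod_eq_top (R := k) (s := fun _ : Fin n => Vk k)), Submodule.span_le]
  rintro x ⟨m, rfl⟩
  rw [expand]
  exact Submodule.sum_mem _ fun w _ => Submodule.smul_mem _ _
    (Submodule.subset_span ⟨w, rfl⟩)

noncomputable instance (n : ℕ) : Module.Finite k (⨂[k]^n (Vk k)) :=
  ⟨Submodule.fg_def.mpr ⟨_, Set.finite_range _, span_b_top n⟩⟩

lemma finrank_le (n : ℕ) : Module.finrank k (⨂[k]^n (Vk k)) ≤ 2 ^ n := by
  have h := finrank_range_le_card (R := k) (fun w : Fin n → Fin 2 => tprod k (fun i => (bvec (w i) : Vk k)))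
  rw [Set.finrank, span_b_top, finrank_top] at h
  simpa using h

instance (n : ℕ) : Nontrivial (⨂[k]^n (Vk k)) := by
  refine nontrivial_of_ne (tprod k fun _ => (bvec 0 : Vk k)) 0 fun h => ?_
  have := congrArg (pureF n (fun _ => LinearMap.proj 0)) h
  simp [pureF, bvec] at this

/-- the set in the definition of `sN`, specialized -/
def setn (n : ℕ) : Set ℕ :=
  {m : ℕ | ∃ W : Fin m → Submodule k (⨂[k]^n (Vk k)),
    (∀ i, W i ≠ ⊥) ∧
    (∀ i (g : SL2 k), ∀ x ∈ W i, (PiTensorProduct.map fun _ : Fin n => rho k g) x ∈ W i) ∧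
    DirectSum.IsInternal W}

lemma one_mem (n : ℕ) : 1 ∈ setn (k := k) n := by
  refine ⟨fun _ => ⊤, fun _ => ?_, fun _ _ _ _ => Submodule.mem_top, ?_⟩
  · exact fun h => absurd h.symm bot_ne_top
  · rw [DirectSum.isInternal_submodule_iff_iSupIndep_and_iSup_eq_top]
    constructor
    · intro i
      have : (⨆ j, ⨆ (_ : j ≠ i), (⊤ : Submodule k (⨂[k]^n (Vk k)))) ≤ ⊥ :=
        iSup_le fun j => iSup_le fun hj => absurd (Subsingleton.elim j i) hj
      exact Disjoint.mono_right this disjoint_bot_right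
    · exact eq_top_iff.mpr (le_iSup (fun _ : Fin 1 => (⊤ : Submodule k (⨂[k]^n (Vk k)))) 0)

lemma mem_le (n m : ℕ) (hm : m ∈ setn (k := k) n) : m ≤ 2 ^ n := by
  obtain ⟨W, hne, _, hint⟩ := hm
  have hind : iSupIndep W :=
    ((DirectSum.isInternal_submodule_iff_iSupIndep_and_iSup_eq_top W).mp hint).1
  haveI : Fintype {i : Fin m // W i ≠ ⊥} := Subtype.fintype _
  have hcard : Fintype.card {i : Fin m // W i ≠ ⊥} = m := by
    rw [Fintype.card_congr (Equiv.subtypeUnivEquiv hne), Fintype.card_fin]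
  have := hind.subtype_ne_bot_le_finrank
  rw [hcard] at this
  exact this.trans (finrank_le n)

lemma pow_mem (r : ℕ) : 2 ^ r ∈ setn (k := k) (Mk k + r) := by
  classical
  have hcardJ : Fintype.card (Fin r → Fin 2) = 2 ^ r := by
    rw [Fintype.card_fun, Fintype.card_fin, Fintype.card_fin]
  let eJ : Fin (2 ^ r) ≃ (Fin r → Fin 2) := (Fintype.equivFinOfCardEq hcardJ).symm
  have hpos : 0 < 2 ^ r := pow_pos (by norm_num) r
  let i0 : Fin (2 ^ r) := ⟨0, hpos⟩
  let W : Fin (2 ^ r) → Submodule k (⨂[k]^(Mk k + r) (Vk k)) := fun i =>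
    if i = i0 then U (eJ i) ⊔ LinearMap.ker (pTot (k := k) (r := r)) else U (eJ i)
  have hUle : ∀ i, U (eJ i) ≤ W i := by
    intro i
    by_cases h : i = i0
    · subst h; rw [show W i0 = U (eJ i0) ⊔ LinearMap.ker (pTot (k := k) (r := r)) from if_pos rfl]
      exact le_sup_left
    · rw [show W i = U (eJ i) from if_neg h]
  have hkerle : LinearMap.ker (pTot (k := k) (r := r)) ≤ W i0 := by
    rw [show W i0 = U (eJ i0) ⊔ LinearMap.ker (pTot (k := k) (r := r)) from if_pos rfl]
    exact le_sup_right
  have hker_pJ : ∀ (J : Fin r → Fin 2) (b : ⨂[k]^(Mk k + r) (Vk k)),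
      b ∈ LinearMap.ker (pTot (k := k) (r := r)) → pJ J b = 0 := by
    intro J b hb
    rw [← pJ_pTot, LinearMap.mem_ker.mp hb, map_zero]
  -- the quasi-projections
  let q : Fin (2 ^ r) → ((⨂[k]^(Mk k + r) (Vk k)) →ₗ[k] (⨂[k]^(Mk k + r) (Vk k))) := fun i =>
    if i = i0 then LinearMap.id - pTot (k := k) (r := r) + pJ (eJ i0) else pJ (eJ i)
  have q_fix : ∀ i, ∀ x ∈ W i, q i x = x := by
    intro i x hx
    by_cases h : i = i0
    · subst h
      rw [show W i0 = U (eJ i0) ⊔ LinearMap.ker (pTot (k := k) (r := r)) from if_pos rfl] at hx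
      obtain ⟨a, ha, b, hb, rfl⟩ := Submodule.mem_sup.mp hx
      rw [show q i0 = LinearMap.id - pTot (k := k) (r := r) + pJ (eJ i0) from if_pos rfl]
      simp only [LinearMap.add_apply, LinearMap.sub_apply, LinearMap.id_apply]
      rw [map_add, pTot_fix ha, LinearMap.mem_ker.mp hb, add_zero,
        map_add, pJ_fix _ ha, hker_pJ _ b hb, add_zero]
      abel
    · rw [show W i = U (eJ i) from if_neg h] at hx
      rw [show q i = pJ (eJ i) from if_neg h]
      exact pJ_fix _ hx
  have q_kill : ∀ i j, j ≠ i → ∀ x ∈ W j, q i x = 0 := by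
    intro i j hj x hx
    have heJ : eJ j ≠ eJ i := fun hh => hj (eJ.injective hh)
    by_cases h : i = i0
    · subst h
      rw [show W j = U (eJ j) from if_neg hj] at hx
      rw [show q i0 = LinearMap.id - pTot (k := k) (r := r) + pJ (eJ i0) from if_pos rfl]
      simp only [LinearMap.add_apply, LinearMap.sub_apply, LinearMap.id_apply]
      rw [pTot_fix hx, pJ_kill (Ne.symm heJ) hx]
      abel
    · rw [show q i = pJ (eJ i) from if_neg h]
      by_cases hji : j = i0
      · subst hji
        rw [show W i0 = U (eJ i0) ⊔ LinearMap.ker (pTot (k := k) (r := r)) from if_pos rfl] at hx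
        obtain ⟨a, ha, b, hb, rfl⟩ := Submodule.mem_sup.mp hx
        rw [map_add, pJ_kill (fun hh => h (eJ.injective hh)) ha, hker_pJ _ b hb, add_zero]
      · rw [show W j = U (eJ j) from if_neg hji] at hx
        exact pJ_kill (Ne.symm heJ) hx
  refine ⟨W, ?_, ?_, ?_⟩
  · -- nonzero
    intro i
    rw [Submodule.ne_bot_iff]
    exact ⟨yJ (eJ i), hUle i (yJ_mem (eJ i)), yJ_ne (eJ i)⟩
  · -- invariance
    intro i g x hx
    show mapn (Mk k + r) g x ∈ W i
    by_cases h : i = i0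
    · subst h
      rw [show W i0 = U (eJ i0) ⊔ LinearMap.ker (pTot (k := k) (r := r)) from if_pos rfl] at hx ⊢
      obtain ⟨a, ha, b, hb, rfl⟩ := Submodule.mem_sup.mp hx
      rw [map_add]
      refine Submodule.add_mem_sup (U_inv _ g ha) ?_
      rw [LinearMap.mem_ker, pTot_equi, LinearMap.mem_ker.mp hb, map_zero]
    · rw [show W i = U (eJ i) from if_neg h] at hx ⊢
      exact U_inv _ g hx
  · -- internal
    rw [DirectSum.isInternal_submodule_iff_iSupIndep_and_iSup_eq_top]
    constructor
    · intro i
      rw [disjoint_iff_inf_le]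
      intro x hx
      have hsup : (⨆ j, ⨆ (_ : j ≠ i), W j) ≤ LinearMap.ker (q i) :=
        iSup_le fun j => iSup_le fun hj => fun y hy => LinearMap.mem_ker.mpr (q_kill i j hj y hy)
      have h1 : q i x = x := q_fix i x hx.1
      have h2 : q i x = 0 := LinearMap.mem_ker.mp (hsup hx.2)
      rw [Submodule.mem_bot, ← h1, h2]
    · rw [eq_top_iff]
      intro x _
      have hsum : (∑ i : Fin (2 ^ r), pJ (eJ i) x) = pTot (k := k) (r := r) x := by
        rw [pTot_apply]
        exact Fintype.sum_equiv eJ _ _ fun i => rfl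
      have hx : x = (∑ i : Fin (2 ^ r), pJ (eJ i) x) + (x - pTot (k := k) (r := r) x) := by
        rw [hsum]; abel
      rw [hx]
      refine Submodule.add_mem _ ?_ ?_
      · exact Submodule.sum_mem _ fun i _ =>
          Submodule.mem_iSup_of_mem i (hUle i (pJ_mem (eJ i) x))
      · refine Submodule.mem_iSup_of_mem i0 (hkerle ?_)
        rw [LinearMap.mem_ker, map_sub, pTot_idem, sub_self]

lemma sN_eq (n : ℕ) :
    sN k (fun g : Matrix.SpecialLinearGroup (Fin 2) k =>
      Matrix.mulVecLin (g : Matrix (Fin 2) (Fin 2) k)) n = sSup (setn (k := k) n) := rfl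

lemma setn_bdd (n : ℕ) : BddAbove (setn (k := k) n) := ⟨2 ^ n, fun m hm => mem_le n m hm⟩

lemma sN_le (n : ℕ) :
    sN k (fun g : Matrix.SpecialLinearGroup (Fin 2) k =>
      Matrix.mulVecLin (g : Matrix (Fin 2) (Fin 2) k)) n ≤ 2 ^ n := by
  rw [sN_eq]
  exact csSup_le ⟨1, one_mem n⟩ (fun m hm => mem_le n m hm)

lemma sN_ge_one (n : ℕ) :
    1 ≤ sN k (fun g : Matrix.SpecialLinearGroup (Fin 2) k =>
      Matrix.mulVecLin (g : Matrix (Fin 2) (Fin 2) k)) n := by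
  rw [sN_eq]
  exact le_csSup (setn_bdd n) (one_mem n)

lemma sN_ge (r : ℕ) :
    2 ^ r ≤ sN k (fun g : Matrix.SpecialLinearGroup (Fin 2) k =>
      Matrix.mulVecLin (g : Matrix (Fin 2) (Fin 2) k)) (Mk k + r) := by
  rw [sN_eq]
  exact le_csSup (setn_bdd _) (pow_mem r)

end SNaux

theorem stmt11 (k : Type*) [Field k] [Fintype k] :
    ∃ A : ℝ, 0 < A ∧ ∀ n : ℕ,
      A * 2 ^ n ≤ (sN k (fun g : Matrix.SpecialLinearGroup (Fin 2) k =>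
        Matrix.mulVecLin (g : Matrix (Fin 2) (Fin 2) k)) n : ℝ) ∧
      (sN k (fun g : Matrix.SpecialLinearGroup (Fin 2) k =>
        Matrix.mulVecLin (g : Matrix (Fin 2) (Fin 2) k)) n : ℝ) ≤ 2 ^ n := by
  refine ⟨((2 : ℝ)⁻¹) ^ (SNaux.Mk k), by positivity, fun n => ⟨?_, ?_⟩⟩
  · by_cases h : SNaux.Mk k ≤ n
    · obtain ⟨r, rfl⟩ : ∃ r, SNaux.Mk k + r = n := ⟨n - SNaux.Mk k, Nat.add_sub_cancel' h⟩
      have hge := SNaux.sN_ge (k := k) r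
      have hA : ((2 : ℝ)⁻¹) ^ (SNaux.Mk k) * 2 ^ (SNaux.Mk k + r) = 2 ^ r := by
        rw [pow_add, ← mul_assoc, ← mul_pow, inv_mul_cancel₀ (two_ne_zero), one_pow, one_mul]
      rw [hA]
      exact_mod_cast hge
    · have h1 := SNaux.sN_ge_one (k := k) n
      have hle : ((2 : ℝ)⁻¹) ^ (SNaux.Mk k) * 2 ^ n ≤ 1 := by
        have hn : n ≤ SNaux.Mk k := le_of_not_ge h
        have h2 : (2 : ℝ) ^ n ≤ 2 ^ (SNaux.Mk k) := by
          apply pow_le_pow_right₀ one_le_two hn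
        calc ((2 : ℝ)⁻¹) ^ (SNaux.Mk k) * 2 ^ n
            ≤ ((2 : ℝ)⁻¹) ^ (SNaux.Mk k) * 2 ^ (SNaux.Mk k) := by
              apply mul_le_mul_of_nonneg_left h2 (by positivity)
          _ = 1 := by rw [← mul_pow, inv_mul_cancel₀ (two_ne_zero), one_pow]
      exact hle.trans (by exact_mod_cast h1)
  · have := SNaux.sN_le (k := k) n
    exact_mod_cast this
end

section
/- Let p ≥ 2 be a natural number and m ∈ ℕ. Write the base-p expansion m+1 = a_d·p^d + ⋯ + a_1·p + a_0 with digits 0 ≤ a_i ≤ p−1 and leading digit a_d ≠ 0, and let k be the number of indices i with 0 ≤ i ≤ d−1 and a_i ≠ 0. Then 2^k · a_d · p^d ≤ (m+1)^{1 + 1/log₂ p}, where the exponent is the real number 1 + (log₂ p)^{-1} and the power is a real power. (In the paper this gives the bound dim T(m) ≤ (m+1)^α, α = 1 + (log₂ p)^{-1}, for indecomposable tilting SL₂-representations in characteristic p, since dim T(m) = 2^k·a_d·p^d.) -/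
theorem stmt12 (p : ℕ) (hp : 2 ≤ p) (m : ℕ) (d : ℕ) (a : ℕ → ℕ)
    (hdig : ∀ i ≤ d, a i ≤ p - 1) (hlead : a d ≠ 0)
    (hexp : m + 1 = ∑ i ∈ Finset.range (d + 1), a i * p ^ i)
    (k : ℕ) (hk : k = (Finset.filter (fun i => a i ≠ 0) (Finset.range d)).card) :
    ((2 ^ k * a d * p ^ d : ℕ) : ℝ) ≤
      ((m + 1 : ℕ) : ℝ) ^ (1 + 1 / Real.logb 2 p) := by
  have hp2 : (2:ℝ) ≤ (p:ℝ) := by exact_mod_cast hp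
  have hlogb : 0 < Real.logb 2 p := Real.logb_pos one_lt_two (by linarith)
  set c : ℝ := 1 / Real.logb 2 p with hc
  have hcpos : 0 < c := by positivity
  have hterm : a d * p ^ d ≤ m + 1 := by
    rw [hexp]
    exact Finset.single_le_sum (f := fun i => a i * p ^ i) (fun i _ => Nat.zero_le _)
      (Finset.mem_range.mpr (Nat.lt_succ_self d))
  have hpd : p ^ d ≤ m + 1 :=
    le_trans (Nat.le_mul_of_pos_left _ (Nat.pos_of_ne_zero hlead)) hterm
  have hkd : k ≤ d := by
    rw [hk]
    exact (Finset.card_filter_le _ _).trans (by simp)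
  have hppos : (0:ℝ) < (p:ℝ) := by linarith
  have hpc : ((p:ℝ)) ^ c = 2 := by
    rw [hc, one_div, Real.inv_logb]
    exact Real.rpow_logb hppos (by linarith) (by norm_num)
  have h2d : ((p:ℝ) ^ d) ^ c = (2:ℝ) ^ d := by
    rw [← Real.rpow_natCast (p:ℝ) d, ← Real.rpow_mul hppos.le, mul_comm,
      Real.rpow_mul hppos.le, hpc, Real.rpow_natCast]
  have hNpos : (0:ℝ) < ((m + 1 : ℕ) : ℝ) := by positivity
  have hNc : ((p:ℝ) ^ d) ^ c ≤ ((m + 1 : ℕ) : ℝ) ^ c := by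
    apply Real.rpow_le_rpow (by positivity) _ hcpos.le
    exact_mod_cast hpd
  have h2k : (2:ℝ) ^ k ≤ ((m + 1 : ℕ) : ℝ) ^ c := by
    calc (2:ℝ) ^ k ≤ (2:ℝ) ^ d := pow_le_pow_right₀ one_le_two hkd
    _ = ((p:ℝ) ^ d) ^ c := h2d.symm
    _ ≤ _ := hNc
  have hterm' : ((a d * p ^ d : ℕ) : ℝ) ≤ ((m + 1 : ℕ) : ℝ) := by exact_mod_cast hterm
  have : ((m + 1 : ℕ) : ℝ) ^ (1 + c) = ((m + 1 : ℕ) : ℝ) * ((m + 1 : ℕ) : ℝ) ^ c := by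
    rw [Real.rpow_add hNpos, Real.rpow_one]
  rw [this]
  push_cast
  calc (2:ℝ) ^ k * (a d) * (p:ℝ) ^ d = ((a d) * (p:ℝ) ^ d) * (2:ℝ) ^ k := by ring
  _ ≤ ((m + 1 : ℕ) : ℝ) * ((m + 1 : ℕ) : ℝ) ^ c := by
      apply mul_le_mul _ h2k (by positivity) hNpos.le
      push_cast at hterm' ⊢; linarith
  _ = (↑m + 1) * (↑m + 1) ^ c := by push_cast; ring
end

section
/- Let p, ℓ ≥ 2 be natural numbers. Define p^{(0)} = 1 and p^{(i)} = p^{i−1}·ℓ for i ≥ 1, and set p' = min(p,ℓ). Let m ∈ ℕ and suppose m+1 = Σ_{i=0}^d a_i·p^{(i)} with digits satisfying 0 ≤ a_0 ≤ ℓ−1, 0 ≤ a_i ≤ p−1 for 1 ≤ i ≤ d, and a_d ≠ 0. Let k be the number of indices i with 0 ≤ i ≤ d−1 and a_i ≠ 0. Then 2^k · a_d · p^{(d)} ≤ (m+1)^{1 + 1/log₂ p'}, where the exponent is the real number 1 + (log₂ p')^{-1} and the power is a real power. (In the paper this gives the bound dim T(m) ≤ (m+1)^α for indecomposable tilting representations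 of the quantum group U_q(sl₂) in mixed characteristic (p,ℓ), since dim T(m) = 2^k·a_d·p^{(d)}.) -/
theorem stmt13 (p ℓ : ℕ) (hp : 2 ≤ p) (hl : 2 ≤ ℓ) (m : ℕ) (d : ℕ) (a : ℕ → ℕ)
    (P : ℕ → ℕ) (hP0 : P 0 = 1) (hP : ∀ i : ℕ, 1 ≤ i → P i = p ^ (i - 1) * ℓ)
    (hdig0 : a 0 ≤ ℓ - 1) (hdig : ∀ i, 1 ≤ i → i ≤ d → a i ≤ p - 1) (hlead : a d ≠ 0)
    (hexp : m + 1 = ∑ i ∈ Finset.range (d + 1), a i * P i)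
    (k : ℕ) (hk : k = (Finset.filter (fun i => a i ≠ 0) (Finset.range d)).card) :
    ((2 ^ k * a d * P d : ℕ) : ℝ) ≤
      ((m + 1 : ℕ) : ℝ) ^ (1 + 1 / Real.logb 2 (min p ℓ)) := by
  have hcast : ((min p ℓ : ℕ) : ℝ) = min (p:ℝ) (ℓ:ℝ) := by push_cast; rfl
  rw [← hcast]
  set q := min p ℓ with hqdef
  have hq2 : 2 ≤ q := le_min hp hl
  -- a d * P d ≤ m + 1
  have hle1 : a d * P d ≤ m + 1 := by
    rw [hexp]
    exact Finset.single_le_sum (f := fun i => a i * P i) (fun i _ => Nat.zero_le _) (Finset.self_mem_range_succ d)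
  -- q ^ d ≤ P d
  have hPd : q ^ d ≤ P d := by
    rcases Nat.eq_zero_or_pos d with h0 | h1
    · simp [h0, hP0]
    · rw [hP d h1]
      calc q ^ d = q ^ (d - 1) * q ^ 1 := by
            rw [← pow_add]; congr 1; omega
        _ ≤ p ^ (d - 1) * ℓ := by
            apply Nat.mul_le_mul
            · exact Nat.pow_le_pow_left (min_le_left _ _) _
            · rw [pow_one]; exact min_le_right p ℓ
  have hkd : k ≤ d := by
    rw [hk]
    exact le_trans (Finset.card_filter_le _ _) (by simp)
  have hPd1 : 1 ≤ P d := le_trans (Nat.one_le_pow _ _ (by omega)) hPd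
  have hqk : q ^ k ≤ m + 1 := by
    calc q ^ k ≤ q ^ d := Nat.pow_le_pow_right (by omega) hkd
      _ ≤ P d := hPd
      _ ≤ a d * P d := Nat.le_mul_of_pos_left _ (Nat.pos_of_ne_zero hlead)
      _ ≤ m + 1 := hle1
  -- real versions
  set N : ℝ := ((m + 1 : ℕ) : ℝ) with hNdef
  have hN1 : (1 : ℝ) ≤ N := by rw [hNdef]; exact_mod_cast Nat.le_add_left 1 m
  have hN0 : 0 < N := by linarith
  have hqR : (2 : ℝ) ≤ (q : ℝ) := by exact_mod_cast hq2
  have hL : 0 < Real.logb 2 q := Real.logb_pos (by norm_num) (by linarith)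
  -- q ^ (1 / logb 2 q) = 2  (rpow)
  have hq2rpow : (q : ℝ) ^ (1 / Real.logb 2 q) = 2 := by
    have hlogq : Real.log (q : ℝ) ≠ 0 := by
      have := Real.log_pos (by linarith : (1:ℝ) < (q:ℝ))
      linarith
    have hlog2 : Real.log 2 ≠ 0 := by
      have := Real.log_pos (by norm_num : (1:ℝ) < 2)
      linarith
    have hmul : Real.log (q : ℝ) * (1 / Real.logb 2 (q : ℝ)) = Real.log 2 := by
      rw [Real.logb]; field_simp
    rw [Real.rpow_def_of_pos (by positivity), hmul, Real.exp_log (by norm_num)]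
  have h2k : (2 : ℝ) ^ k ≤ N ^ (1 / Real.logb 2 q) := by
    have hqkR : ((q : ℝ)) ^ (k : ℕ) ≤ N := by rw [hNdef]; exact_mod_cast hqk
    calc (2 : ℝ) ^ k = ((q : ℝ) ^ (1 / Real.logb 2 q)) ^ k := by rw [hq2rpow]
      _ = ((q : ℝ) ^ (k : ℕ)) ^ (1 / Real.logb 2 q) := by
          rw [← Real.rpow_natCast ((q:ℝ) ^ (1 / Real.logb 2 q)), ← Real.rpow_mul (by positivity),
            mul_comm, Real.rpow_mul (by positivity), Real.rpow_natCast]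
      _ ≤ N ^ (1 / Real.logb 2 q) :=
          Real.rpow_le_rpow (by positivity) hqkR (by positivity)
  have hle1R : ((a d * P d : ℕ) : ℝ) ≤ N := by rw [hNdef]; exact_mod_cast hle1
  calc ((2 ^ k * a d * P d : ℕ) : ℝ) = (2:ℝ) ^ k * ((a d * P d : ℕ) : ℝ) := by
        push_cast; ring
    _ ≤ N ^ (1 / Real.logb 2 q) * N := by
        apply mul_le_mul h2k hle1R (by positivity) (by positivity)
    _ = N ^ (1 + 1 / Real.logb 2 q) := by
        rw [Real.rpow_add hN0, Real.rpow_one, mul_comm]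
end

section
/- Let M ≥ 1 be a natural number and let b : ℕ → ℝ be a sequence satisfying 1 ≤ b(n) ≤ M^n for all n and the supermultiplicativity condition b(n)·b(m) ≤ b(n+m) for all n, m. If liminf_{n→∞} (Σ_{i=0}^n C(n,i)·b(i))^{1/n} ≥ M + 1 (where C(n,i) is the binomial coefficient), then the limit lim_{n→∞} b(n)^{1/n} exists and equals M. -/
open Filter Real

theorem stmt14 (M : ℕ) (hM : 1 ≤ M) (b : ℕ → ℝ)
    (hb1 : ∀ n : ℕ, 1 ≤ b n) (hbM : ∀ n : ℕ, b n ≤ (M : ℝ) ^ n)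
    (hsuper : ∀ n m : ℕ, b n * b m ≤ b (n + m))
    (hliminf : (M : ℝ) + 1 ≤
      Filter.liminf
        (fun n : ℕ => (∑ i ∈ Finset.range (n + 1), (n.choose i : ℝ) * b i) ^ ((n : ℝ)⁻¹))
        Filter.atTop) :
    Filter.Tendsto (fun n : ℕ => b n ^ ((n : ℝ)⁻¹)) Filter.atTop (nhds (M : ℝ)) := by
  have hbpos : ∀ n, (0:ℝ) < b n := fun n => lt_of_lt_of_le one_pos (hb1 n)
  have hMpos : (0:ℝ) < M := by exact_mod_cast hM
  -- u n = - log (b n) is subadditive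
  set u : ℕ → ℝ := fun n => -Real.log (b n) with hu_def
  have hu : Subadditive u := by
    intro m n
    have := Real.log_le_log (mul_pos (hbpos m) (hbpos n)) (hsuper m n)
    rw [Real.log_mul (hbpos m).ne' (hbpos n).ne'] at this
    simp only [hu_def]
    linarith
  have hub : ∀ n : ℕ, u n / n ≥ -Real.log M := by
    intro n
    rcases Nat.eq_zero_or_pos n with rfl | hn
    · simpa using Real.log_nonneg (show (1:ℝ) ≤ M by exact_mod_cast hM)
    · have hlog : Real.log (b n) ≤ n * Real.log M := by
        calc Real.log (b n) ≤ Real.log ((M:ℝ)^n) := Real.log_le_log (hbpos n) (hbM n)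
        _ = n * Real.log M := by rw [Real.log_pow]
      have hn' : (0:ℝ) < n := by exact_mod_cast hn
      rw [ge_iff_le, hu_def]
      simp only []
      rw [neg_div, neg_le_neg_iff, div_le_iff₀ hn']
      calc Real.log (b n) ≤ n * Real.log M := hlog
      _ = Real.log M * n := by ring
  have hbdd : BddBelow (Set.range fun n : ℕ => u n / n) := by
    refine ⟨-Real.log M, ?_⟩
    rintro x ⟨n, rfl⟩
    exact hub n
  have htend := hu.tendsto_lim hbdd
  set L : ℝ := -hu.lim with hL_def
  -- log b n / n → L
  have htendL : Tendsto (fun n : ℕ => Real.log (b n) / n) atTop (nhds L) := by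
    have : (fun n : ℕ => Real.log (b n) / n) = fun n => -(u n / n) := by
      funext n; simp [hu_def, neg_div]
    rw [this, hL_def]
    exact htend.neg
  -- upper bound on L
  have hLle : L ≤ Real.log M := by
    have : -Real.log M ≤ hu.lim := by
      rw [Subadditive.lim]
      apply le_csInf
      · exact Set.Nonempty.image _ Set.nonempty_Ici
      · rintro x ⟨n, -, rfl⟩; exact hub n
    simp only [hL_def]; linarith
  -- b n ≤ (exp L)^n
  have hble : ∀ n : ℕ, b n ≤ Real.exp L ^ n := by
    intro n
    rcases Nat.eq_zero_or_pos n with rfl | hn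
    · have h0 : b 0 ≤ 1 := by nlinarith [hsuper 0 0, hb1 0]
      simpa using h0
    · have h1 : hu.lim ≤ u n / n := hu.lim_le_div hbdd hn.ne'
      have h2 : Real.log (b n) / n ≤ L := by
        simp only [hL_def, hu_def] at h1 ⊢
        rw [le_neg]
        calc -(Real.log (b n) / n) = -Real.log (b n) / n := by rw [neg_div]
        _ ≥ hu.lim := h1
      have h3 : Real.log (b n) ≤ n * L := by
        rw [div_le_iff₀ (by exact_mod_cast hn)] at h2; linarith
      calc b n = Real.exp (Real.log (b n)) := (Real.exp_log (hbpos n)).symm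
      _ ≤ Real.exp (n * L) := Real.exp_le_exp.mpr h3
      _ = Real.exp L ^ n := by rw [← Real.exp_nat_mul]
  -- liminf bound gives M ≤ exp L
  have hMle : (M:ℝ) ≤ Real.exp L := by
    by_contra hcon
    push_neg at hcon
    have key : ∀ n : ℕ, n ≥ 1 →
        (∑ i ∈ Finset.range (n + 1), (n.choose i : ℝ) * b i) ^ ((n : ℝ)⁻¹)
          ≤ Real.exp L + 1 := by
      intro n hn
      have hsum : (∑ i ∈ Finset.range (n + 1), (n.choose i : ℝ) * b i)
          ≤ (Real.exp L + 1) ^ n := by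
        have : (Real.exp L + 1) ^ n
            = ∑ i ∈ Finset.range (n + 1), Real.exp L ^ i * 1 ^ (n - i) * n.choose i := by
          rw [add_pow]
        rw [this]
        apply Finset.sum_le_sum
        intro i hi
        rw [one_pow, mul_one]
        rw [mul_comm ((n.choose i : ℝ))]
        exact mul_le_mul_of_nonneg_right (hble i) (Nat.cast_nonneg _)
      have h0 : (0:ℝ) ≤ ∑ i ∈ Finset.range (n + 1), (n.choose i : ℝ) * b i := by
        apply Finset.sum_nonneg
        intro i _
        exact mul_nonneg (Nat.cast_nonneg _) (hbpos i).le
      calc (∑ i ∈ Finset.range (n + 1), (n.choose i : ℝ) * b i) ^ ((n : ℝ)⁻¹)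
          ≤ ((Real.exp L + 1) ^ n) ^ ((n : ℝ)⁻¹) :=
            Real.rpow_le_rpow h0 hsum (by positivity)
        _ = Real.exp L + 1 := Real.pow_rpow_inv_natCast (by positivity) (by omega)
    have hlim_le : Filter.liminf
        (fun n : ℕ => (∑ i ∈ Finset.range (n + 1), (n.choose i : ℝ) * b i) ^ ((n : ℝ)⁻¹))
        Filter.atTop ≤ Real.exp L + 1 := by
      apply Filter.liminf_le_of_frequently_le
      · exact ((eventually_ge_atTop 1).mono key).frequently
      · exact Filter.isBoundedUnder_of ⟨0, fun n => Real.rpow_nonneg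
          (Finset.sum_nonneg fun i _ => mul_nonneg (Nat.cast_nonneg _) (hbpos i).le) _⟩
    have : (M:ℝ) + 1 ≤ Real.exp L + 1 := le_trans hliminf hlim_le
    linarith
  have hLeq : Real.exp L = M := by
    have h1 : Real.exp L ≤ M := by
      calc Real.exp L ≤ Real.exp (Real.log M) := Real.exp_le_exp.mpr hLle
      _ = M := Real.exp_log hMpos
    linarith
  -- conclude
  have : (fun n : ℕ => b n ^ ((n : ℝ)⁻¹))
      = fun n : ℕ => Real.exp (Real.log (b n) / n) := by
    funext n
    rw [Real.rpow_def_of_pos (hbpos n), div_eq_mul_inv]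
  rw [this, ← hLeq]
  exact (Real.continuous_exp.tendsto L).comp htendL
end

section
/- Let M ≥ 1 be a natural number and let x : ℕ → Fin M → ℕ be such that Σ_{i} x(n)(i) = n for every n, and suppose there exists a real constant C > 0 such that |x(n)(i) − n/M| ≤ C·√n for all n ≥ 1 and all i. Then the multinomial coefficients a(n) = n!/(x(n)(0)!·x(n)(1)!⋯x(n)(M−1)!) satisfy lim_{n→∞} a(n)^{1/n} = M. -/
open Filter Real Topology

section helpers

lemma sqrtpi_le_stirling (n : ℕ) : Real.sqrt π ≤ Stirling.stirlingSeq (n+1) := by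
  have h := Stirling.stirlingSeq'_antitone.le_of_tendsto
    (Stirling.tendsto_stirlingSeq_sqrt_pi.comp (tendsto_add_atTop_nat 1)) n
  simpa using h

lemma stirling_le' (n : ℕ) : Stirling.stirlingSeq (n+1) ≤ Real.exp 1 := by
  have h := Stirling.stirlingSeq'_antitone (Nat.zero_le n)
  simp only [Function.comp] at h
  calc Stirling.stirlingSeq (n+1) ≤ Stirling.stirlingSeq 1 := h
    _ = Real.exp 1 / Real.sqrt 2 := Stirling.stirlingSeq_one
    _ ≤ Real.exp 1 := by
        rw [div_le_iff₀ (by positivity)]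
        nlinarith [Real.sq_sqrt (by norm_num : (2:ℝ) ≥ 0), Real.sqrt_nonneg 2,
          Real.exp_pos 1, Real.one_le_exp (by norm_num : (0:ℝ) ≤ 1)]

lemma log_fact_lb (n : ℕ) : (n:ℝ) * Real.log n - n ≤ Real.log (n.factorial) := by
  cases n with
  | zero => simp
  | succ m =>
    set n := m + 1
    have hn : (1:ℝ) ≤ n := by exact_mod_cast Nat.one_le_iff_ne_zero.2 (Nat.succ_ne_zero m)
    have hf := Stirling.log_stirlingSeq_formula n
    have h1 : Real.log (Stirling.stirlingSeq n) ≥ 0 := by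
      have := sqrtpi_le_stirling m
      have hπ : (1:ℝ) ≤ Real.sqrt π := by
        rw [show (1:ℝ) = Real.sqrt 1 by simp]
        exact Real.sqrt_le_sqrt (by linarith [Real.pi_gt_three])
      exact Real.log_nonneg (le_trans hπ this)
    have h2 : (0:ℝ) ≤ 1/2 * Real.log (2*n) := by
      have : (1:ℝ) ≤ 2*n := by linarith
      exact mul_nonneg (by norm_num) (Real.log_nonneg this)
    have h3 : Real.log ((n:ℝ) / Real.exp 1) = Real.log n - 1 := by
      rw [Real.log_div (by linarith) (Real.exp_ne_zero 1), Real.log_exp]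
    nlinarith [hf, h3]

lemma log_fact_ub (n : ℕ) (hn : 1 ≤ n) :
    Real.log (n.factorial) ≤ (n:ℝ) * Real.log n - n + (2 + Real.log n) := by
  obtain ⟨m, rfl⟩ := Nat.exists_eq_add_of_le hn
  set n := 1 + m with hdef
  have hn1 : (1:ℝ) ≤ n := by exact_mod_cast hn
  have hf := Stirling.log_stirlingSeq_formula n
  have h1 : Real.log (Stirling.stirlingSeq n) ≤ 1 := by
    have h := stirling_le' m
    rw [Nat.add_comm 1 m] at hdef
    rw [hdef]
    calc Real.log (Stirling.stirlingSeq (m+1)) ≤ Real.log (Real.exp 1) :=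
      Real.log_le_log (lt_of_lt_of_le (by positivity) (sqrtpi_le_stirling m)) h
      _ = 1 := Real.log_exp 1
  have h2 : 1/2 * Real.log (2*(n:ℝ)) ≤ 1 + Real.log n := by
    rw [Real.log_mul (by norm_num) (by linarith)]
    have hl2 : Real.log 2 ≤ 1 := by
      calc Real.log 2 ≤ (2:ℝ) - 1 := Real.log_le_sub_one_of_pos (by norm_num)
        _ = 1 := by norm_num
    have hln : 0 ≤ Real.log n := Real.log_nonneg hn1
    linarith
  have h3 : Real.log ((n:ℝ) / Real.exp 1) = Real.log n - 1 := by
    rw [Real.log_div (by linarith) (Real.exp_ne_zero 1), Real.log_exp]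
  nlinarith [hf, h3]

lemma neg_two_mul_le_log_one_sub (t : ℝ) (h0 : 0 ≤ t) (h1 : t ≤ 1/2) :
    -(2*t) ≤ Real.log (1 - t) := by
  have h2 : (0:ℝ) < 1 - t := by linarith
  have h3 : Real.log (1-t)⁻¹ ≤ (1-t)⁻¹ - 1 := Real.log_le_sub_one_of_pos (by positivity)
  rw [Real.log_inv] at h3
  have h4 : (1-t)⁻¹ - 1 = t / (1-t) := by field_simp; ring
  have h5 : t / (1-t) ≤ 2*t := by rw [div_le_iff₀ h2]; nlinarith
  linarith

lemma nat_sqrt_tendsto : Tendsto (fun n : ℕ => Real.sqrt n) atTop atTop := by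
  have h1 : Tendsto (fun x : ℝ => Real.sqrt x) atTop atTop := by
    apply (tendsto_rpow_atTop (by norm_num : (0:ℝ) < 1/2)).congr
    exact fun x => (Real.sqrt_eq_rpow x).symm
  exact h1.comp tendsto_natCast_atTop_atTop

end helpers

set_option maxHeartbeats 1000000 in
theorem stmt15 (M : ℕ) (hM : 1 ≤ M) (x : ℕ → Fin M → ℕ)
    (hsum : ∀ n : ℕ, ∑ i, x n i = n)
    (C : ℝ) (hC : 0 < C)
    (hx : ∀ n : ℕ, 1 ≤ n → ∀ i : Fin M, |(x n i : ℝ) - (n : ℝ) / (M : ℝ)| ≤ C * Real.sqrt n) :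
    Filter.Tendsto
      (fun n : ℕ => ((n.factorial : ℝ) / ∏ i, ((x n i).factorial : ℝ)) ^ ((n : ℝ)⁻¹))
      Filter.atTop (nhds (M : ℝ)) := by
  have hMr : (1:ℝ) ≤ (M:ℝ) := by exact_mod_cast hM
  have hM0 : (0:ℝ) < (M:ℝ) := by linarith
  set L : ℕ → ℝ := fun n => Real.log n.factorial - ∑ i, Real.log ((x n i).factorial) with hLdef
  set K : ℝ := 2*C*(M:ℝ) + 4*(M:ℝ) + 4 with hKdef
  have hK0 : 0 < K := by positivity
  have key : ∀ n : ℕ, 1 ≤ n → 2*(M:ℝ)*(C+1) ≤ Real.sqrt n →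
      |L n - n * Real.log M| ≤ K * Real.sqrt n := by
    intro n hn hs
    set s : ℝ := Real.sqrt n with hsdef
    have hn1 : (1:ℝ) ≤ (n:ℝ) := by exact_mod_cast hn
    have hs0 : 0 < s := lt_of_lt_of_le (by positivity) hs
    have hss : s * s = (n:ℝ) := Real.mul_self_sqrt (by positivity)
    have hs1 : (1:ℝ) ≤ s := by nlinarith
    have hCMs : C*(M:ℝ)/s ≤ 1/2 := by rw [div_le_iff₀ hs0]; nlinarith
    have hCMs0 : 0 ≤ C*(M:ℝ)/s := by positivity
    set u : ℝ := (n:ℝ)/(M:ℝ) with hudef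
    have hu0 : 0 < u := by positivity
    set X : Fin M → ℝ := fun i => ((x n i : ℕ) : ℝ) with hXdef
    have hXnn : ∀ i, 0 ≤ X i := fun i => Nat.cast_nonneg _
    have hXu : ∀ i, X i ≤ u + C*s := fun i => by
      have := (abs_le.mp (hx n hn i)).2; simp only [hXdef]; linarith
    have hXl : ∀ i, u - C*s ≤ X i := fun i => by
      have := (abs_le.mp (hx n hn i)).1; simp only [hXdef]; linarith
    have hb1 : (1:ℝ) ≤ u - C*s := by
      have h : 1 + C*s ≤ (n:ℝ)/(M:ℝ) := by
        rw [le_div_iff₀ hM0]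
        nlinarith [mul_le_mul_of_nonneg_left hs (le_of_lt hs0)]
      simp only [hudef]; linarith
    have hXn : ∀ i, X i ≤ (n:ℝ) := fun i => by
      have h : x n i ≤ n := by
        conv_rhs => rw [← hsum n]
        exact Finset.single_le_sum (fun j _ => Nat.zero_le _) (Finset.mem_univ i)
      exact Nat.cast_le.2 h
    have hSX : ∑ i, X i = (n:ℝ) := by rw [hXdef, ← Nat.cast_sum, hsum n]
    set S : ℝ := ∑ i, X i * Real.log (X i) with hSdef
    have hlogn : Real.log n = 2 * Real.log s := by
      rw [← hss, Real.log_mul (ne_of_gt hs0) (ne_of_gt hs0)]; ring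
    have hlogs : Real.log s ≤ s - 1 := Real.log_le_sub_one_of_pos hs0
    have hlogn_nn : 0 ≤ Real.log (n:ℝ) := Real.log_nonneg hn1
    have hlogu : Real.log u = Real.log n - Real.log M :=
      Real.log_div (by positivity) (ne_of_gt hM0)
    have hnlogu : (n:ℝ) * Real.log u = (n:ℝ)*Real.log n - (n:ℝ)*Real.log M := by
      rw [hlogu]; ring
    have hS_ub : S ≤ (n:ℝ) * Real.log u + C*(M:ℝ)*s := by
      have h1 : S ≤ ∑ i, X i * Real.log (u + C*s) := by
        apply Finset.sum_le_sum
        intro i _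
        rcases eq_or_lt_of_le (hXnn i) with h|h
        · rw [← h]; simp
        · exact mul_le_mul_of_nonneg_left (Real.log_le_log h (hXu i)) (hXnn i)
      have h2 : ∑ i, X i * Real.log (u + C*s) = (n:ℝ) * Real.log (u + C*s) := by
        rw [← Finset.sum_mul, hSX]
      have h3 : u + C*s = u * (1 + C*(M:ℝ)/s) := by
        field_simp [hudef]
        linear_combination C*hss - C*((show u*(M:ℝ) = n by rw [hudef]; field_simp) : u*(M:ℝ) = n)
      have h4 : Real.log (u + C*s) ≤ Real.log u + C*(M:ℝ)/s := by
        rw [h3, Real.log_mul (ne_of_gt hu0) (by positivity)]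
        have := Real.log_le_sub_one_of_pos (show (0:ℝ) < 1 + C*(M:ℝ)/s by positivity)
        linarith
      have h5 : C*(M:ℝ)*((n:ℝ)/s) = C*(M:ℝ)*s := by rw [← hss]; field_simp
      calc S ≤ (n:ℝ) * Real.log (u + C*s) := h1.trans_eq h2
        _ ≤ (n:ℝ) * (Real.log u + C*(M:ℝ)/s) :=
            mul_le_mul_of_nonneg_left h4 (by positivity)
        _ = (n:ℝ) * Real.log u + C*(M:ℝ)*((n:ℝ)/s) := by ring
        _ = (n:ℝ) * Real.log u + C*(M:ℝ)*s := by rw [h5]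
    have hS_lb : (n:ℝ) * Real.log u - 2*(C*(M:ℝ))*s ≤ S := by
      have h1 : ∑ i, X i * Real.log (u - C*s) ≤ S := by
        apply Finset.sum_le_sum
        intro i _
        exact mul_le_mul_of_nonneg_left
          (Real.log_le_log (by linarith) (hXl i)) (hXnn i)
      have h2 : ∑ i, X i * Real.log (u - C*s) = (n:ℝ) * Real.log (u - C*s) := by
        rw [← Finset.sum_mul, hSX]
      have h3 : u - C*s = u * (1 - C*(M:ℝ)/s) := by
        field_simp [hudef]
        linear_combination (-C)*hss + C*((show u*(M:ℝ) = n by rw [hudef]; field_simp) : u*(M:ℝ) = n)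
      have h4 : Real.log u - 2*(C*(M:ℝ)/s) ≤ Real.log (u - C*s) := by
        rw [h3, Real.log_mul (ne_of_gt hu0) (by nlinarith)]
        have := neg_two_mul_le_log_one_sub (C*(M:ℝ)/s) hCMs0 hCMs
        linarith
      have h5 : (n:ℝ) * (Real.log u - 2*(C*(M:ℝ)/s)) =
          (n:ℝ) * Real.log u - 2*(C*(M:ℝ))*s := by
        rw [← hss]; field_simp
      calc (n:ℝ) * Real.log u - 2*(C*(M:ℝ))*s
          = (n:ℝ) * (Real.log u - 2*(C*(M:ℝ)/s)) := h5.symm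
        _ ≤ (n:ℝ) * Real.log (u - C*s) := mul_le_mul_of_nonneg_left h4 (by positivity)
        _ = ∑ i, X i * Real.log (u - C*s) := h2.symm
        _ ≤ S := h1
    have hxf_ub : ∀ i, Real.log ((x n i).factorial)
        ≤ X i * Real.log (X i) - X i + (2 + Real.log n) := by
      intro i
      rcases Nat.eq_zero_or_pos (x n i) with h|h
      · have hXi : X i = 0 := by simp [hXdef, h]
        rw [h, hXi]; simp; linarith
      · have hX0 : (0:ℝ) < X i := Nat.cast_pos.2 h
        calc Real.log ((x n i).factorial)
            ≤ X i * Real.log (X i) - X i + (2 + Real.log (X i)) := log_fact_ub (x n i) h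
          _ ≤ X i * Real.log (X i) - X i + (2 + Real.log n) := by
              have : Real.log (X i) ≤ Real.log n := Real.log_le_log hX0 (hXn i)
              linarith
    have hsum_ub : ∑ i, Real.log ((x n i).factorial)
        ≤ S - (n:ℝ) + (M:ℝ)*(2 + Real.log n) := by
      calc ∑ i, Real.log ((x n i).factorial)
          ≤ ∑ i, (X i * Real.log (X i) - X i + (2 + Real.log n)) :=
            Finset.sum_le_sum (fun i _ => hxf_ub i)
        _ = S - (n:ℝ) + (M:ℝ)*(2 + Real.log n) := by
            rw [Finset.sum_add_distrib, Finset.sum_sub_distrib, hSX, Finset.sum_const,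
              Finset.card_univ, Fintype.card_fin, nsmul_eq_mul]
    have hsum_lb : S - (n:ℝ) ≤ ∑ i, Real.log ((x n i).factorial) := by
      calc S - (n:ℝ) = ∑ i, (X i * Real.log (X i) - X i) := by
            rw [Finset.sum_sub_distrib, hSX]
        _ ≤ ∑ i, Real.log ((x n i).factorial) :=
            Finset.sum_le_sum (fun i _ => log_fact_lb (x n i))
    have hnf_lb := log_fact_lb n
    have hnf_ub := log_fact_ub n hn
    have hLn : L n = Real.log n.factorial - ∑ i, Real.log ((x n i).factorial) := rfl
    have hlog4s : 2 + Real.log n ≤ 4*s := by rw [hlogn]; linarith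
    have hCMs_nn : 0 ≤ C*(M:ℝ)*s := by positivity
    have hMs : (M:ℝ)*(2 + Real.log n) ≤ 4*(M:ℝ)*s := by
      nlinarith [mul_le_mul_of_nonneg_left hlog4s (le_of_lt hM0)]
    rw [abs_le]
    constructor
    · have hL_lb : (n:ℝ)*Real.log M - C*(M:ℝ)*s - (M:ℝ)*(2 + Real.log n) ≤ L n := by
        rw [hLn]; linarith
      have hKs : K*s = 2*(C*(M:ℝ)*s) + 4*((M:ℝ)*s) + 4*s := by rw [hKdef]; ring
      nlinarith [hs0.le, hMs]
    · have hL_ub : L n ≤ (n:ℝ)*Real.log M + 2*(C*(M:ℝ))*s + (2 + Real.log n) := by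
        rw [hLn]; linarith
      have hKs : K*s = 2*(C*(M:ℝ)*s) + 4*((M:ℝ)*s) + 4*s := by rw [hKdef]; ring
      nlinarith [hs0.le, hlog4s, hMr]
  have hev : ∀ᶠ n : ℕ in atTop, 1 ≤ n ∧ 2*(M:ℝ)*(C+1) ≤ Real.sqrt n :=
    (eventually_ge_atTop 1).and (nat_sqrt_tendsto.eventually_ge_atTop _)
  have hLdiv : Tendsto (fun n : ℕ => L n / n) atTop (𝓝 (Real.log M)) := by
    have h0 : Tendsto (fun n : ℕ => K / Real.sqrt n) atTop (𝓝 0) :=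
      Tendsto.div_atTop tendsto_const_nhds nat_sqrt_tendsto
    have hc : Tendsto (fun _ : ℕ => Real.log (M:ℝ)) atTop (𝓝 (Real.log (M:ℝ))) :=
      tendsto_const_nhds
    have hlim1 : Tendsto (fun n : ℕ => Real.log M - K / Real.sqrt n) atTop (𝓝 (Real.log M)) := by
      simpa using hc.sub h0
    have hlim2 : Tendsto (fun n : ℕ => Real.log M + K / Real.sqrt n) atTop (𝓝 (Real.log M)) := by
      simpa using hc.add h0
    apply tendsto_of_tendsto_of_tendsto_of_le_of_le' hlim1 hlim2
    · filter_upwards [hev] with n ⟨hn, hs⟩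
      have h := (abs_le.mp (key n hn hs)).1
      have hn0 : (0:ℝ) < n := by exact_mod_cast hn
      have hs0 : (0:ℝ) < Real.sqrt n := Real.sqrt_pos.2 hn0
      have hss : Real.sqrt n * Real.sqrt n = (n:ℝ) := Real.mul_self_sqrt hn0.le
      rw [le_div_iff₀ hn0]
      have e : (Real.log M - K / Real.sqrt n) * n = n * Real.log M - K * Real.sqrt n := by
        field_simp
        linear_combination (2*C*(M:ℝ)+4*(M:ℝ)+4) * hss
      rw [e]; linarith
    · filter_upwards [hev] with n ⟨hn, hs⟩
      have h := (abs_le.mp (key n hn hs)).2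
      have hn0 : (0:ℝ) < n := by exact_mod_cast hn
      have hs0 : (0:ℝ) < Real.sqrt n := Real.sqrt_pos.2 hn0
      have hss : Real.sqrt n * Real.sqrt n = (n:ℝ) := Real.mul_self_sqrt hn0.le
      rw [div_le_iff₀ hn0]
      have e : (Real.log M + K / Real.sqrt n) * n = n * Real.log M + K * Real.sqrt n := by
        field_simp
        linear_combination (-(2*C*(M:ℝ)+4*(M:ℝ)+4)) * hss
      rw [e]; linarith
  have hpos : ∀ n : ℕ, (0:ℝ) < (n.factorial : ℝ) / ∏ i, ((x n i).factorial : ℝ) := by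
    intro n
    have h1 : (0:ℝ) < (n.factorial : ℝ) := by exact_mod_cast n.factorial_pos
    have h2 : (0:ℝ) < ∏ i, ((x n i).factorial : ℝ) :=
      Finset.prod_pos (fun i _ => by exact_mod_cast (x n i).factorial_pos)
    exact div_pos h1 h2
  have hlog : ∀ n : ℕ, Real.log ((n.factorial : ℝ) / ∏ i, ((x n i).factorial : ℝ)) = L n := by
    intro n
    have h1 : ((n.factorial : ℝ)) ≠ 0 := by positivity
    have h2 : (∏ i, ((x n i).factorial : ℝ)) ≠ 0 := by
      apply ne_of_gt
      exact Finset.prod_pos (fun i _ => by exact_mod_cast (x n i).factorial_pos)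
    rw [Real.log_div h1 h2, Real.log_prod]
    exact fun i _ => by positivity
  have hfinal : Tendsto (fun n : ℕ => Real.exp (L n / n)) atTop (𝓝 (M:ℝ)) := by
    have h := (Real.continuous_exp.tendsto (Real.log M)).comp hLdiv
    rwa [Real.exp_log hM0] at h
  apply hfinal.congr'
  filter_upwards [eventually_ge_atTop 1] with n hn
  rw [Real.rpow_def_of_pos (hpos n), hlog n, div_eq_mul_inv]
end
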